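/- arXiv:2108.06100 — 7 statements merged into one kernel-verified Lean document; each statement's English description precedes it below -/
import Mathlib

section
/- If G is an amenable group and A ⊆ B is a G-tight inclusion of G-C*-algebras, then A = ℂ. Consequently, if a group admits a G-tight inclusion A ⊆ B with A nontrivial, then G is non-amenable. -/
open scoped BoundedContinuousFunction ENNReal

/-- An element of a star ring is (formally) positive if it is of the form `b* * b`. -/
def StarPos {R : Type*} [NonUnitalSemiring R] [StarRing R] (a : R) : Prop :=
  ∃ b, a = star b * b

section UCP

variable {A B : Type*} [Ring A] [StarRing A] [Algebra ℂ A]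
  [Ring B] [StarRing B] [Algebra ℂ B]

/-- A ℂ-linear map between unital star algebras is unital completely positive if it is
unital and all its matrix amplifications preserve positivity. -/
def IsUCP (φ : A →ₗ[ℂ] B) : Prop :=
  φ 1 = 1 ∧ ∀ (n : ℕ) (M : Matrix (Fin n) (Fin n) A), StarPos M → StarPos (M.map φ)

/-- A unital positive ℂ-linear map between unital star algebras. -/
def IsUP (φ : A →ₗ[ℂ] B) : Prop :=
  φ 1 = 1 ∧ ∀ a : A, StarPos a → StarPos (φ a)

/-- Equivariance of a linear map with respect to actions of `G`. -/
def IsEquivariant (G : Type*) [SMul G A] [SMul G B] (φ : A →ₗ[ℂ] B) : Prop :=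
  ∀ (g : G) (a : A), φ (g • a) = g • φ a

/-- An inclusion (embedding) `ι : A → B` of `G`-operator algebras is `G`-tight if the only
`G`-equivariant ucp map `A → B` is the inclusion itself. -/
def IsTight (G : Type*) [SMul G A] [SMul G B] (ι : A →⋆ₐ[ℂ] B) : Prop :=
  ∀ φ : A →ₗ[ℂ] B, IsUCP φ → IsEquivariant G φ → φ = ι.toAlgHom.toLinearMap

end UCP

/-- If `G` is amenable (every unital `G`-C*-algebra admits a `G`-invariant state)
and `A ⊆ B` is a `G`-tight inclusion, then `A = ℂ`; equivalently, a group admitting a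
`G`-tight inclusion with `A` nontrivial is non-amenable. -/
theorem stmt_2 {G : Type v} {A B : Type u} [Group G]
    [NormedRing A] [StarRing A] [CStarRing A] [NormedAlgebra ℂ A] [StarModule ℂ A]
    [NormedRing B] [StarRing B] [CStarRing B] [NormedAlgebra ℂ B] [StarModule ℂ B]
    [MulSemiringAction G A] [MulSemiringAction G B] [SMulCommClass G ℂ B]
    (hamen : ∀ (A' : Type u) [NormedRing A'] [StarRing A'] [CStarRing A']
      [NormedAlgebra ℂ A'] [StarModule ℂ A'] [MulSemiringAction G A'],
      ∃ τ : A' →ₗ[ℂ] ℂ, IsUCP τ ∧ ∀ (g : G) (a : A'), τ (g • a) = τ a)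
    (ι : A →⋆ₐ[ℂ] B) (hinj : Function.Injective ι)
    (htight : IsTight G ι) :
    ∀ a : A, ∃ c : ℂ, a = algebraMap ℂ A c := by
  obtain ⟨τ, ⟨hτ1, hτpos⟩, hτinv⟩ := hamen A
  set φ : A →ₗ[ℂ] B := (Algebra.linearMap ℂ B).comp τ with hφdef
  have hφ : IsUCP φ := by
    constructor
    · simp [hφdef, hτ1]
    · intro n M hM
      obtain ⟨C, hC⟩ := hτpos n M hM
      have hmap : M.map φ = (M.map τ).map (algebraMap ℂ B) := by
        rw [Matrix.map_map]; rfl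
      refine ⟨C.map (algebraMap ℂ B), ?_⟩
      rw [hmap, hC]
      have hstar : ∀ x : ℂ, algebraMap ℂ B (star x) = star (algebraMap ℂ B x) :=
        fun x => algebraMap_star_comm x
      rw [Matrix.map_mul (f := (algebraMap ℂ B))]
      congr 1
      rw [Matrix.star_eq_conjTranspose, Matrix.star_eq_conjTranspose,
        Matrix.conjTranspose_map (algebraMap ℂ B) hstar]
  have hequiv : IsEquivariant G φ := by
    intro g a
    show algebraMap ℂ B (τ (g • a)) = g • algebraMap ℂ B (τ a)
    rw [hτinv g a, Algebra.algebraMap_eq_smul_one, smul_comm, smul_one]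
  have heq := htight φ hφ hequiv
  intro a
  refine ⟨τ a, hinj ?_⟩
  have h1 : φ a = ι a := by rw [heq]; rfl
  have h3 : ι ((algebraMap ℂ A) (τ a)) = algebraMap ℂ B (τ a) := AlgHomClass.commutes ι (τ a)
  rw [h3]
  exact h1.symm
end

section
/- Every unital G-C*-algebra B admits a maximal G-invariant unital C*-subalgebra A such that the inclusion A ⊆ B is G-tight. -/
open scoped BoundedContinuousFunction ENNReal

variable {G B : Type*} [Group G]
  [NormedRing B] [StarRing B] [CStarRing B] [NormedAlgebra ℂ B] [StarModule ℂ B]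
  [MulSemiringAction G B]

/-- A `G`-invariant unital star subalgebra `S ⊆ B` is tightly included if the only
`G`-equivariant ucp map `S → B` is the inclusion. -/
def SubTight (G : Type*) [Group G] {B : Type*}
    [NormedRing B] [StarRing B] [CStarRing B] [NormedAlgebra ℂ B] [StarModule ℂ B]
    [MulSemiringAction G B]
    (S : StarSubalgebra ℂ B) (hS : ∀ (g : G), ∀ b ∈ S, g • b ∈ S) : Prop :=
  ∀ φ : S →ₗ[ℂ] B, IsUCP φ →
    (∀ (g : G) (a : S), φ ⟨g • (a : B), hS g a a.2⟩ = g • φ a) →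
    φ = S.subtype.toAlgHom.toLinearMap

/- ### Auxiliary lemmas -/

/-- A ucp map is star-preserving (purely formally, from 2-positivity). -/
theorem IsUCP.star_map' {A B : Type*} [Ring A] [StarRing A] [Algebra ℂ A]
    [Ring B] [StarRing B] [Algebra ℂ B] {φ : A →ₗ[ℂ] B} (hφ : IsUCP φ) (a : A) :
    φ (star a) = star (φ a) := by
  set M : Matrix (Fin 2) (Fin 2) A := Matrix.of ![![1, a], ![star a, star a * a]] with hMdef
  have hM : StarPos M := by
    refine ⟨Matrix.of ![![1, a], ![0, 0]], ?_⟩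
    ext i j
    rw [Matrix.star_eq_conjTranspose]
    fin_cases i <;> fin_cases j <;>
      simp [hMdef, Matrix.mul_apply, Fin.sum_univ_two, Matrix.conjTranspose_apply]
  obtain ⟨C, hC⟩ := hφ.2 2 M hM
  have h1 : star (M.map φ) = M.map φ := by rw [hC, star_mul, star_star]
  have h2 : (star (M.map φ)) 0 1 = (M.map φ) 0 1 := by rw [h1]
  rw [Matrix.star_apply, Matrix.map_apply, Matrix.map_apply] at h2
  have hM10 : M 1 0 = star a := rfl
  have hM01 : M 0 1 = a := rfl
  rw [hM10, hM01] at h2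
  rw [← h2, star_star]

theorem StarPos.map_ringHom {R S : Type*} [Ring R] [StarRing R] [Ring S] [StarRing S]
    (f : R →+* S) (hf : ∀ r, f (star r) = star (f r)) {n : ℕ}
    {M : Matrix (Fin n) (Fin n) R} (hM : StarPos M) : StarPos (M.map f) := by
  obtain ⟨N, rfl⟩ := hM
  refine ⟨N.map f, ?_⟩
  rw [Matrix.map_mul (f := f)]
  congr 1
  ext i j
  rw [Matrix.map_apply, Matrix.star_apply, Matrix.star_apply, Matrix.map_apply, hf]

/-- The smallest `G`-invariant star subalgebra of `B`. -/
def invMin (G : Type*) (B : Type*) [Group G]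
    [NormedRing B] [StarRing B] [CStarRing B] [NormedAlgebra ℂ B] [StarModule ℂ B]
    [MulSemiringAction G B] : StarSubalgebra ℂ B where
  carrier := {b | ∀ S : StarSubalgebra ℂ B, (∀ (g : G), ∀ x ∈ S, g • x ∈ S) → b ∈ S}
  mul_mem' := fun ha hb S hS => mul_mem (ha S hS) (hb S hS)
  one_mem' := fun S _ => one_mem S
  add_mem' := fun ha hb S hS => add_mem (ha S hS) (hb S hS)
  zero_mem' := fun S _ => zero_mem S
  algebraMap_mem' := fun c S _ => S.algebraMap_mem c
  star_mem' := fun ha S hS => star_mem (ha S hS)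

theorem invMin_inv : ∀ (g : G), ∀ b ∈ invMin G B, g • b ∈ invMin G B :=
  fun g b hb S hS => hS g b (hb S hS)

theorem invMin_le {S : StarSubalgebra ℂ B} (h : ∀ (g : G), ∀ x ∈ S, g • x ∈ S) :
    invMin G B ≤ S := fun _ hb => hb S h

/-- The smallest invariant star subalgebra is tight. -/
theorem invMin_tight : SubTight G (invMin G B) invMin_inv := by
  intro φ hφ heq
  have hstar : ∀ a : invMin G B, φ (star a) = star (φ a) := hφ.star_map'
  -- the "fixed multiplicative domain"
  let A : StarSubalgebra ℂ B :=
  { carrier := {b | ∃ hb : b ∈ (invMin G B), φ ⟨b, hb⟩ = b ∧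
      ∀ x : (invMin G B), φ (⟨b, hb⟩ * x) = b * φ x ∧ φ (x * ⟨b, hb⟩) = φ x * b}
    mul_mem' := by
      rintro a b ⟨ha, hfa, hma⟩ ⟨hb, hfb, hmb⟩
      refine ⟨mul_mem ha hb, ?_, fun x => ⟨?_, ?_⟩⟩
      · have h1 : (⟨a * b, mul_mem ha hb⟩ : (invMin G B)) = ⟨a, ha⟩ * ⟨b, hb⟩ := rfl
        rw [h1, (hma ⟨b, hb⟩).1, hfb]
      · have h1 : (⟨a * b, mul_mem ha hb⟩ : (invMin G B)) * x = ⟨a, ha⟩ * (⟨b, hb⟩ * x) :=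
          Subtype.ext (mul_assoc a b x)
        rw [h1, (hma _).1, (hmb x).1, mul_assoc]
      · have h1 : x * (⟨a * b, mul_mem ha hb⟩ : (invMin G B)) = (x * ⟨a, ha⟩) * ⟨b, hb⟩ :=
          Subtype.ext (mul_assoc (x : B) a b).symm
        rw [h1, (hmb _).2, (hma x).2, mul_assoc]
    one_mem' := by
      refine ⟨one_mem (invMin G B), ?_, fun x => ⟨?_, ?_⟩⟩
      · exact hφ.1
      · have h1 : (⟨(1 : B), one_mem (invMin G B)⟩ : (invMin G B)) * x = x := Subtype.ext (one_mul (x : B))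
        rw [h1, one_mul]
      · have h1 : x * (⟨(1 : B), one_mem (invMin G B)⟩ : (invMin G B)) = x := Subtype.ext (mul_one (x : B))
        rw [h1, mul_one]
    add_mem' := by
      rintro a b ⟨ha, hfa, hma⟩ ⟨hb, hfb, hmb⟩
      refine ⟨add_mem ha hb, ?_, fun x => ⟨?_, ?_⟩⟩
      · have h1 : (⟨a + b, add_mem ha hb⟩ : (invMin G B)) = ⟨a, ha⟩ + ⟨b, hb⟩ := rfl
        rw [h1, map_add, hfa, hfb]
      · have h1 : (⟨a + b, add_mem ha hb⟩ : (invMin G B)) * x = ⟨a, ha⟩ * x + ⟨b, hb⟩ * x :=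
          Subtype.ext (add_mul a b x)
        rw [h1, map_add, (hma x).1, (hmb x).1, add_mul]
      · have h1 : x * (⟨a + b, add_mem ha hb⟩ : (invMin G B)) = x * ⟨a, ha⟩ + x * ⟨b, hb⟩ :=
          Subtype.ext (mul_add (x : B) a b)
        rw [h1, map_add, (hma x).2, (hmb x).2, mul_add]
    zero_mem' := by
      refine ⟨zero_mem (invMin G B), ?_, fun x => ⟨?_, ?_⟩⟩
      · have h1 : (⟨(0 : B), zero_mem (invMin G B)⟩ : (invMin G B)) = 0 := rfl
        rw [h1, map_zero]
      · have h1 : (⟨(0 : B), zero_mem (invMin G B)⟩ : (invMin G B)) * x = 0 := Subtype.ext (zero_mul (x : B))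
        rw [h1, map_zero, zero_mul]
      · have h1 : x * (⟨(0 : B), zero_mem (invMin G B)⟩ : (invMin G B)) = 0 := Subtype.ext (mul_zero (x : B))
        rw [h1, map_zero, mul_zero]
    algebraMap_mem' := by
      intro c
      refine ⟨(invMin G B).algebraMap_mem c, ?_, fun x => ⟨?_, ?_⟩⟩
      · have h1 : (⟨algebraMap ℂ B c, (invMin G B).algebraMap_mem c⟩ : (invMin G B)) = c • 1 := by
          apply Subtype.ext
          simp [Algebra.algebraMap_eq_smul_one]
        rw [h1, map_smul, hφ.1, Algebra.algebraMap_eq_smul_one]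
      · have h1 : (⟨algebraMap ℂ B c, (invMin G B).algebraMap_mem c⟩ : (invMin G B)) * x = c • x := by
          apply Subtype.ext
          simp [Algebra.smul_def]
        rw [h1, map_smul, Algebra.smul_def]
      · have h1 : x * (⟨algebraMap ℂ B c, (invMin G B).algebraMap_mem c⟩ : (invMin G B)) = c • x := by
          apply Subtype.ext
          simp [Algebra.smul_def, Algebra.commutes]
        rw [h1, map_smul, Algebra.smul_def, Algebra.commutes]
    star_mem' := by
      rintro b ⟨hb, hfb, hmb⟩
      refine ⟨star_mem hb, ?_, fun x => ⟨?_, ?_⟩⟩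
      · have h1 : (⟨star b, star_mem hb⟩ : (invMin G B)) = star ⟨b, hb⟩ := rfl
        rw [h1, hstar, hfb]
      · have h1 : (⟨star b, star_mem hb⟩ : (invMin G B)) * x = star (star x * ⟨b, hb⟩) :=
          Subtype.ext (by rw [star_mul, star_star]; rfl)
        rw [h1, hstar, (hmb (star x)).2, star_mul, hstar, star_star]
      · have h1 : x * (⟨star b, star_mem hb⟩ : (invMin G B)) = star (⟨b, hb⟩ * star x) :=
          Subtype.ext (by rw [star_mul, star_star]; rfl)
        rw [h1, hstar, (hmb (star x)).1, star_mul, hstar, star_star] }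
  have hAinv : ∀ (g : G), ∀ b ∈ A, g • b ∈ A := by
    rintro g b ⟨hb, hfb, hmb⟩
    refine ⟨invMin_inv g b hb, ?_, fun x => ⟨?_, ?_⟩⟩
    · have := heq g ⟨b, hb⟩
      simpa [hfb] using this
    · set y : (invMin G B) := ⟨g⁻¹ • (x : B), invMin_inv g⁻¹ (x : B) x.2⟩ with hy
      have h1 : (⟨g • b, invMin_inv g b hb⟩ : (invMin G B)) * x
          = ⟨g • ((⟨b, hb⟩ * y : (invMin G B)) : B), invMin_inv g _ (⟨b, hb⟩ * y).2⟩ := by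
        apply Subtype.ext
        show (g • b) * (x : B) = g • (b * (g⁻¹ • (x : B)))
        rw [smul_mul', smul_inv_smul]
      have h2 : φ y = g⁻¹ • φ x := heq g⁻¹ x
      rw [h1, heq g (⟨b, hb⟩ * y), (hmb y).1, h2, smul_mul', smul_inv_smul]
    · set y : (invMin G B) := ⟨g⁻¹ • (x : B), invMin_inv g⁻¹ (x : B) x.2⟩ with hy
      have h1 : x * (⟨g • b, invMin_inv g b hb⟩ : (invMin G B))
          = ⟨g • ((y * ⟨b, hb⟩ : (invMin G B)) : B), invMin_inv g _ (y * ⟨b, hb⟩).2⟩ := by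
        apply Subtype.ext
        show (x : B) * (g • b) = g • ((g⁻¹ • (x : B)) * b)
        rw [smul_mul', smul_inv_smul]
      have h2 : φ y = g⁻¹ • φ x := heq g⁻¹ x
      rw [h1, heq g (y * ⟨b, hb⟩), (hmb y).2, h2, smul_mul', smul_inv_smul]
  have hle : (invMin G B) ≤ A := invMin_le hAinv
  ext a
  obtain ⟨ha, hfa, -⟩ := hle a.2
  have h1 : (⟨(a : B), ha⟩ : (invMin G B)) = a := Subtype.ext rfl
  rw [h1] at hfa
  exact hfa

/-- The union of a chain of star subalgebras. -/
def chainSup (c : Set (StarSubalgebra ℂ B)) (hc : IsChain (· ≤ ·) c)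
    (T₀ : StarSubalgebra ℂ B) (hT₀ : T₀ ∈ c) : StarSubalgebra ℂ B where
  carrier := {b | ∃ S ∈ c, b ∈ S}
  mul_mem' := by
    rintro a b ⟨S, hS, haS⟩ ⟨T, hT, hbT⟩
    rcases hc.total hS hT with h | h
    · exact ⟨T, hT, mul_mem (h haS) hbT⟩
    · exact ⟨S, hS, mul_mem haS (h hbT)⟩
  one_mem' := ⟨T₀, hT₀, one_mem T₀⟩
  add_mem' := by
    rintro a b ⟨S, hS, haS⟩ ⟨T, hT, hbT⟩
    rcases hc.total hS hT with h | h
    · exact ⟨T, hT, add_mem (h haS) hbT⟩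
    · exact ⟨S, hS, add_mem haS (h hbT)⟩
  zero_mem' := ⟨T₀, hT₀, zero_mem T₀⟩
  algebraMap_mem' := fun r => ⟨T₀, hT₀, T₀.algebraMap_mem r⟩
  star_mem' := by
    rintro a ⟨S, hS, haS⟩
    exact ⟨S, hS, star_mem haS⟩

theorem le_chainSup {c : Set (StarSubalgebra ℂ B)} {hc : IsChain (· ≤ ·) c}
    {T₀ : StarSubalgebra ℂ B} {hT₀ : T₀ ∈ c} {S : StarSubalgebra ℂ B} (hS : S ∈ c) :
    S ≤ chainSup c hc T₀ hT₀ := fun b hb => ⟨S, hS, hb⟩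

/-- Every unital `G`-C*-algebra `B` admits a maximal `G`-invariant unital
C*-subalgebra `A` with `A ⊆ B` `G`-tight. -/
theorem stmt_5 :
    ∃ (S : StarSubalgebra ℂ B) (hS : ∀ (g : G), ∀ b ∈ S, g • b ∈ S),
      SubTight G S hS ∧
      ∀ (T : StarSubalgebra ℂ B) (hT : ∀ (g : G), ∀ b ∈ T, g • b ∈ T),
        SubTight G T hT → S ≤ T → S = T := by
  set s : Set (StarSubalgebra ℂ B) :=
    {S | ∃ h : ∀ (g : G), ∀ b ∈ S, g • b ∈ S, SubTight G S h} with hs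
  have hzorn : ∀ c ⊆ s, IsChain (· ≤ ·) c → ∀ y ∈ c, ∃ ub ∈ s, ∀ z ∈ c, z ≤ ub := by
    intro c hcs hc T₀ hT₀
    set U : StarSubalgebra ℂ B := chainSup c hc T₀ hT₀ with hUdef
    have hUinv : ∀ (g : G), ∀ b ∈ U, g • b ∈ U := by
      rintro g b ⟨S, hSc, hbS⟩
      obtain ⟨hSinv, -⟩ := hcs hSc
      exact ⟨S, hSc, hSinv g b hbS⟩
    refine ⟨U, ⟨hUinv, ?_⟩, fun z hz => le_chainSup hz⟩
    -- tightness of the union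
    intro φ hφ heq
    ext x
    obtain ⟨S, hSc, hxS⟩ := x.2
    obtain ⟨hSinv, hStight⟩ := hcs hSc
    set ι : S →⋆ₐ[ℂ] U := StarSubalgebra.inclusion (le_chainSup hSc) with hι
    have hιval : ∀ a : S, ((ι a : U) : B) = (a : B) := fun a => rfl
    set ψ : S →ₗ[ℂ] B := φ ∘ₗ ι.toAlgHom.toLinearMap with hψ
    have hψval : ∀ a : S, ψ a = φ (ι a) := fun a => rfl
    have hψucp : IsUCP ψ := by
      constructor
      · rw [hψval 1, map_one, hφ.1]
      · intro n M hM
        have h1 : StarPos (M.map ι) :=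
          hM.map_ringHom ι.toAlgHom.toRingHom (fun r => map_star ι r)
        have h2 := hφ.2 n (M.map ι) h1
        have h3 : (M.map ι).map φ = M.map ψ := by
          rw [Matrix.map_map]
          rfl
        rwa [h3] at h2
    have hψeq : ∀ (g : G) (a : S), ψ ⟨g • (a : B), hSinv g a a.2⟩ = g • ψ a := by
      intro g a
      have h1 : ι ⟨g • (a : B), hSinv g a a.2⟩
          = ⟨g • ((ι a : U) : B), hUinv g _ (ι a).2⟩ := Subtype.ext rfl
      rw [hψval, h1, heq g (ι a), hψval]
    have := hStight ψ hψucp hψeq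
    have h4 : ψ ⟨(x : B), hxS⟩ = (x : B) := by rw [this]; rfl
    have h5 : ι ⟨(x : B), hxS⟩ = x := Subtype.ext rfl
    rw [hψval, h5] at h4
    rw [h4]
    rfl
  obtain ⟨m, -, hm⟩ := zorn_le_nonempty₀ s hzorn (invMin G B) ⟨invMin_inv, invMin_tight⟩
  obtain ⟨hminv, hmtight⟩ := hm.1
  exact ⟨m, hminv, hmtight, fun T hT hTt hle => le_antisymm hle (hm.2 ⟨hT, hTt⟩ hle)⟩
end

section
/- Let A ⊆ B ⊆ C be G-equivariant inclusions of G-operator algebras. If the inclusion A ⊆ B is G-tight and there exists a faithful G-equivariant conditional expectation E: C → B, then the inclusion A ⊆ C is G-tight. -/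
open scoped BoundedContinuousFunction ENNReal

/-! ### Auxiliary material: C⋆-structure on the completion of a C⋆-normed ring -/

open UniformSpace UniformSpace.Completion

section CompletionInstances
variable {X : Type*} [NormedRing X] [StarRing X] [CStarRing X]

noncomputable instance : Star (Completion X) := ⟨Completion.map star⟩

lemma Completion.coe_star' (x : X) : ((star x : X) : Completion X) = star (x : Completion X) :=
  (Completion.map_coe star_isometry.uniformContinuous x).symm

noncomputable instance : StarRing (Completion X) where
  star_involutive x := by
    refine Completion.induction_on x ?_ fun a => ?_
    · exact isClosed_eq (Completion.continuous_map.comp Completion.continuous_map) continuous_id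
    · rw [← Completion.coe_star', ← Completion.coe_star', star_star]
  star_mul x y := by
    refine Completion.induction_on₂ x y ?_ fun a b => ?_
    · apply isClosed_eq
      · exact Completion.continuous_map.comp _root_.continuous_mul
      · exact ((Completion.continuous_map (f := (star : X → X))).comp continuous_snd).mul
          ((Completion.continuous_map (f := (star : X → X))).comp continuous_fst)
    · rw [← Completion.coe_mul, ← Completion.coe_star', ← Completion.coe_star',
        ← Completion.coe_star', star_mul, Completion.coe_mul]
  star_add x y := by
    refine Completion.induction_on₂ x y ?_ fun a b => ?_
    · apply isClosed_eq
      · exact Completion.continuous_map.comp _root_.continuous_add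
      · exact ((Completion.continuous_map (f := (star : X → X))).comp continuous_fst).add
          ((Completion.continuous_map (f := (star : X → X))).comp continuous_snd)
    · rw [← Completion.coe_add, ← Completion.coe_star', ← Completion.coe_star',
        ← Completion.coe_star', star_add, Completion.coe_add]

noncomputable instance : CStarRing (Completion X) where
  norm_mul_self_le x := by
    have key : ∀ y : Completion X, ‖star y * y‖ = ‖y‖ * ‖y‖ := by
      intro y
      refine Completion.induction_on y ?_ fun a => ?_
      · apply isClosed_eq
        · exact continuous_norm.comp ((Completion.continuous_map).mul continuous_id)
        · exact continuous_norm.mul continuous_norm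
      · rw [← Completion.coe_star', ← Completion.coe_mul, Completion.norm_coe,
          Completion.norm_coe, CStarRing.norm_star_mul_self]
    exact (key x).ge

end CompletionInstances

section CompletionAlgebra
variable {X : Type*} [NormedRing X] [StarRing X] [CStarRing X] [NormedAlgebra ℂ X] [StarModule ℂ X]

noncomputable instance : NormedAlgebra ℂ (Completion X) where
  norm_smul_le := norm_smul_le

noncomputable instance : StarModule ℂ (Completion X) where
  star_smul c x := by
    refine Completion.induction_on x ?_ fun a => ?_
    · apply isClosed_eq
      · exact Completion.continuous_map.comp (continuous_const_smul c)
      · exact (Completion.continuous_map (f := (star : X → X))).const_smul (star c)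
    · rw [← Completion.coe_smul, ← Completion.coe_star', ← Completion.coe_star',
        ← Completion.coe_smul, star_smul]

noncomputable instance : CStarAlgebra (Completion X) := { }

end CompletionAlgebra

/-! ### Sums of squares -/

lemma complete_sum_sq {Y : Type*} [CStarAlgebra Y] :
    ∀ s : Multiset Y, (s.map fun w => star w * w).sum = 0 → ∀ w ∈ s, star w * w = 0 := by
  letI := CStarAlgebra.spectralOrder Y
  haveI := CStarAlgebra.spectralOrderedRing Y
  intro s
  induction s using Multiset.induction with
  | empty => simp
  | cons a t ih =>
    intro h w hw
    rw [Multiset.map_cons, Multiset.sum_cons] at h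
    have ht : (0:Y) ≤ (t.map fun w => star w * w).sum := by
      apply Multiset.sum_nonneg
      intro x hx
      obtain ⟨y, -, rfl⟩ := Multiset.mem_map.mp hx
      exact star_mul_self_nonneg y
    have ha : (0:Y) ≤ star a * a := star_mul_self_nonneg a
    obtain ⟨h1, h2⟩ := (add_eq_zero_iff_of_nonneg ha ht).mp h
    rcases Multiset.mem_cons.mp hw with rfl | hw'
    · exact h1
    · exact ih h2 w hw'

lemma sum_sq_eq_zero {X : Type*} [NormedRing X] [StarRing X] [CStarRing X] [NormedAlgebra ℂ X]
    [StarModule ℂ X] (s : Multiset X) (h : (s.map fun w => star w * w).sum = 0) :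
    ∀ w ∈ s, w = 0 := by
  intro w hw
  set j : X →+* Completion X := Completion.coeRingHom
  have hj : ∀ x : X, j (star x * x) = star (j x) * (j x) := by
    intro x
    rw [map_mul]
    congr 1
    exact (Completion.coe_star' x).symm ▸ rfl
  have hmap : ((s.map j).map fun w => star w * w).sum = 0 := by
    rw [Multiset.map_map]
    have : ((fun w => star w * w) ∘ j) = j ∘ (fun w => star w * w) := by
      funext x; simp only [Function.comp_apply]; rw [hj]
    rw [this, ← Multiset.map_map, ← map_multiset_sum, h, map_zero]
  have hz : j w ∈ s.map j := Multiset.mem_map_of_mem j hw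
  have h0 : star (j w) * j w = 0 := complete_sum_sq (s.map j) hmap (j w) hz
  have hw0 : j w = 0 := (CStarRing.star_mul_self_eq_zero_iff _).mp h0
  have hn : ‖w‖ = 0 := by
    rw [← Completion.norm_coe (E := X) w]
    show ‖j w‖ = 0
    rw [hw0, norm_zero]
  exact norm_eq_zero.mp hn

section SumSq
variable {R : Type*} [Ring R] [StarRing R]

/-- A finite sum of elements of the form `star w * w`. -/
def SumSq (x : R) : Prop := ∃ s : Multiset R, x = (s.map fun w => star w * w).sum

lemma SumSq.add {x y : R} (hx : SumSq x) (hy : SumSq y) : SumSq (x + y) := by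
  obtain ⟨s, rfl⟩ := hx; obtain ⟨t, rfl⟩ := hy
  exact ⟨s + t, by rw [Multiset.map_add, Multiset.sum_add]⟩

lemma SumSq.single (w : R) : SumSq (star w * w) := ⟨{w}, by simp⟩

lemma SumSq.zero : SumSq (0 : R) := ⟨0, by simp⟩

lemma sumSq_fin {m : ℕ} (w : Fin m → R) : SumSq (∑ k, star (w k) * w k) :=
  ⟨(List.ofFn w : List R), by
    rw [Multiset.map_coe, Multiset.sum_coe, List.map_ofFn, List.sum_ofFn]
    rfl⟩

lemma vec_schwarz {m : ℕ} (u v : Fin m → R) (b : R)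
    (hu : ∑ k, star (u k) * u k = 1) (hb : ∑ j, star (u j) * v j = b) :
    ∑ k, star (v k - u k * b) * (v k - u k * b)
      = (∑ k, star (v k) * v k) - star b * b := by
  have hb' : ∑ k, star (v k) * u k = star b := by
    rw [← hb, star_sum]
    simp [star_mul]
  have expand : ∀ k, star (v k - u k * b) * (v k - u k * b)
      = (star (v k) * v k) - ((star (v k) * u k) * b) - (star b * (star (u k) * v k))
        + (star b * ((star (u k) * u k) * b)) := by
    intro k
    simp only [star_sub, star_mul]
    noncomm_ring
  calc ∑ k, star (v k - u k * b) * (v k - u k * b)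
      = (∑ k, star (v k) * v k) - (∑ k, star (v k) * u k) * b
        - star b * (∑ k, star (u k) * v k) + star b * ((∑ k, star (u k) * u k) * b) := by
        simp only [expand, Finset.sum_add_distrib, Finset.sum_sub_distrib,
          ← Finset.sum_mul, ← Finset.mul_sum]
    _ = (∑ k, star (v k) * v k) - star b * b := by
        rw [hu, hb, hb']
        noncomm_ring

end SumSq

lemma fin_sum_sq_eq_zero {X : Type*} [NormedRing X] [StarRing X] [CStarRing X]
    [NormedAlgebra ℂ X] [StarModule ℂ X] {m : ℕ} (w : Fin m → X)
    (h : ∑ k, star (w k) * w k = 0) (k : Fin m) : w k = 0 := by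
  apply sum_sq_eq_zero (List.ofFn w : List X)
  · rw [Multiset.map_coe, Multiset.sum_coe, List.map_ofFn, List.sum_ofFn]
    exact h
  · rw [Multiset.mem_coe, List.mem_ofFn]
    exact ⟨k, rfl⟩

lemma SumSq.eq_zero {X : Type*} [NormedRing X] [StarRing X] [CStarRing X]
    [NormedAlgebra ℂ X] [StarModule ℂ X] {x y : X} (hx : SumSq x) (hy : SumSq y)
    (h : x + y = 0) : x = 0 := by
  obtain ⟨s, rfl⟩ := hx
  obtain ⟨t, rfl⟩ := hy
  rw [← Multiset.sum_add, ← Multiset.map_add] at h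
  have hz := sum_sq_eq_zero _ h
  apply Multiset.sum_eq_zero
  intro z hzmem
  obtain ⟨w, hw, rfl⟩ := Multiset.mem_map.mp hzmem
  rw [hz w (Multiset.mem_add.mpr (Or.inl hw)), star_zero, zero_mul]

/-! ### General lemmas about ucp maps -/

section Extract
variable {P Q : Type*} [Ring P] [StarRing P] [Algebra ℂ P] [Ring Q] [StarRing Q] [Algebra ℂ Q]

lemma ucp_extract (ψ : P →ₗ[ℂ] Q) (hψ : IsUCP ψ) {n : ℕ} (m : Fin (n + 1) → P) :
    ∃ N : Fin (n + 1) → Fin (n + 1) → Q,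
      ∀ i j, ψ (star (m i) * m j) = ∑ k, star (N k i) * N k j := by
  set M : Matrix (Fin (n + 1)) (Fin (n + 1)) P := Matrix.of fun i j => if i = 0 then m j else 0
    with hM
  have hMM : ∀ i j, (star M * M) i j = star (m i) * m j := by
    intro i j
    rw [Matrix.star_eq_conjTranspose, Matrix.mul_apply]
    rw [Finset.sum_eq_single_of_mem 0 (Finset.mem_univ 0) ?_]
    · simp [hM]
    · intro k _ hk
      simp [hM, hk]
  obtain ⟨N, hN⟩ := hψ.2 (n + 1) (star M * M) ⟨M, rfl⟩
  refine ⟨fun k i => N k i, fun i j => ?_⟩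
  have h1 : ((star M * M).map ψ) i j = ψ (star (m i) * m j) := by
    rw [Matrix.map_apply, hMM]
  have h2 : (star N * N) i j = ∑ k, star (N k i) * N k j := by
    rw [Matrix.star_eq_conjTranspose, Matrix.mul_apply]
    simp [Matrix.conjTranspose_apply]
  rw [← h1, hN, h2]

lemma IsUCP.map_star (ψ : P →ₗ[ℂ] Q) (hψ : IsUCP ψ) (x : P) : ψ (star x) = star (ψ x) := by
  obtain ⟨N, hN⟩ := ucp_extract ψ hψ (n := 1) ![1, x]
  have h01 : ψ x = ∑ k, star (N k 0) * N k 1 := by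
    have := hN 0 1
    simpa using this
  have h10 : ψ (star x) = ∑ k, star (N k 1) * N k 0 := by
    have := hN 1 0
    simpa using this
  rw [h01, h10, star_sum]
  simp [star_mul]

lemma IsUCP.schwarz (ψ : P →ₗ[ℂ] Q) (hψ : IsUCP ψ) (x : P) :
    ∃ p, SumSq p ∧ ψ (star x * x) = star (ψ x) * ψ x + p := by
  obtain ⟨N, hN⟩ := ucp_extract ψ hψ (n := 1) ![1, x]
  set u : Fin 2 → Q := fun k => N k 0 with hu'
  set v : Fin 2 → Q := fun k => N k 1 with hv'
  have hu : ∑ k, star (u k) * u k = 1 := by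
    have := hN 0 0
    simpa [hψ.1] using this.symm
  have hb : ∑ j, star (u j) * v j = ψ x := by
    have := hN 0 1
    simpa using this.symm
  have hvv : ∑ k, star (v k) * v k = ψ (star x * x) := by
    have := hN 1 1
    simpa using this.symm
  refine ⟨∑ k, star (v k - u k * ψ x) * (v k - u k * ψ x), sumSq_fin _, ?_⟩
  rw [vec_schwarz u v (ψ x) hu hb, hvv]
  abel

lemma IsUCP.map_sumSq (ψ : P →ₗ[ℂ] Q) (hψ : IsUCP ψ) {q : P} (hq : SumSq q) : SumSq (ψ q) := by
  obtain ⟨s, rfl⟩ := hq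
  induction s using Multiset.induction with
  | empty => simpa using SumSq.zero
  | cons a t ih =>
    rw [Multiset.map_cons, Multiset.sum_cons, map_add]
    obtain ⟨p, hp, hs⟩ := IsUCP.schwarz ψ hψ a
    rw [hs]
    exact ((SumSq.single _).add hp).add ih

end Extract

/-- If `A ⊆ B` is `G`-tight and there is a faithful `G`-equivariant conditional
expectation `E : C → B`, then `A ⊆ C` is `G`-tight. -/
theorem stmt_9 {G A B C : Type*} [Group G]
    [NormedRing A] [StarRing A] [CStarRing A] [NormedAlgebra ℂ A] [StarModule ℂ A]
    [NormedRing B] [StarRing B] [CStarRing B] [NormedAlgebra ℂ B] [StarModule ℂ B]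
    [NormedRing C] [StarRing C] [CStarRing C] [NormedAlgebra ℂ C] [StarModule ℂ C]
    [MulSemiringAction G A] [MulSemiringAction G B] [MulSemiringAction G C]
    (ιAB : A →⋆ₐ[ℂ] B) (ιBC : B →⋆ₐ[ℂ] C)
    (hBC_inj : Function.Injective ιBC)
    (hBC_eq : ∀ (g : G) (b : B), ιBC (g • b) = g • ιBC b)
    (htight : IsTight G ιAB)
    (E : C →ₗ[ℂ] B) (hEucp : IsUCP E) (hEeq : IsEquivariant G E)
    (hEproj : ∀ b : B, E (ιBC b) = b)
    (hEfaith : ∀ x : C, E (star x * x) = 0 → x = 0) :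
    IsTight G (ιBC.comp ιAB) := by
  intro φ hφucp hφeq
  -- `E ∘ φ` is ucp and equivariant, hence equals `ιAB` by tightness
  have hcomp_ucp : IsUCP (E.comp φ) := by
    constructor
    · simp [LinearMap.comp_apply, hφucp.1, hEucp.1]
    · intro n M hM
      have hmm : M.map ⇑(E.comp φ) = (M.map ⇑φ).map ⇑E := by
        rw [Matrix.map_map]
        rfl
      rw [hmm]
      exact hEucp.2 n _ (hφucp.2 n M hM)
  have hcomp_eq : IsEquivariant G (E.comp φ) := by
    intro g a
    simp [LinearMap.comp_apply, hφeq g a, hEeq g (φ a)]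
  have htφ := htight (E.comp φ) hcomp_ucp hcomp_eq
  have hEφ : ∀ a : A, E (φ a) = ιAB a := by
    intro a
    have := LinearMap.congr_fun htφ a
    simpa using this
  have hEstar : ∀ y : C, E (star y) = star (E y) := IsUCP.map_star E hEucp
  -- the bimodule property of `E` over the image of `ιBC`
  have hbimod : ∀ (b' : B) (x : C), E (star (ιBC b') * x) = star b' * E x := by
    intro b' x
    obtain ⟨N, hN⟩ := ucp_extract E hEucp (n := 2) ![1, ιBC b', x]
    set u : Fin 3 → B := fun k => N k 0 with hu'
    set v : Fin 3 → B := fun k => N k 1 with hv'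
    set z : Fin 3 → B := fun k => N k 2 with hz'
    have hu : ∑ k, star (u k) * u k = 1 := by
      have := hN 0 0
      simpa [hEucp.1] using this.symm
    have hb : ∑ j, star (u j) * v j = b' := by
      have := hN 0 1
      simpa [hEproj] using this.symm
    have hvv : ∑ k, star (v k) * v k = star b' * b' := by
      have h := hN 1 1
      have harg : star ((![1, ιBC b', x] : Fin 3 → C) 1) * (![1, ιBC b', x] : Fin 3 → C) 1
          = ιBC (star b' * b') := by
        simp [map_mul, map_star]
      rw [harg, hEproj] at h
      exact h.symm
    have hw : ∀ k, v k = u k * b' := by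
      have h0 : ∑ k, star (v k - u k * b') * (v k - u k * b') = 0 := by
        rw [vec_schwarz u v b' hu hb, hvv, sub_self]
      intro k
      have := fin_sum_sq_eq_zero _ h0 k
      rwa [sub_eq_zero] at this
    have h12 : E (star (ιBC b') * x) = ∑ k, star (v k) * z k := by
      have := hN 1 2
      simpa using this
    have h02 : E x = ∑ k, star (u k) * z k := by
      have := hN 0 2
      simpa using this
    rw [h12, h02, Finset.mul_sum]
    refine Finset.sum_congr rfl fun k _ => ?_
    rw [hw k, star_mul]
    noncomm_ring
  have hbimod' : ∀ (b'' : B) (y : C), E (star y * ιBC b'') = star (E y) * b'' := by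
    intro b'' y
    have h1 : star y * ιBC b'' = star (star (ιBC b'') * y) := by
      rw [star_mul, star_star]
    rw [h1, hEstar, hbimod, star_mul, star_star]
  -- now the main argument
  apply LinearMap.ext
  intro a
  set b : B := ιAB a with hbdef
  set x : C := φ a with hxdef
  set c : C := ιBC b with hcdef
  set d : C := x - c with hddef
  have hEc : E c = b := hEproj b
  have hEd : E d = 0 := by
    rw [hddef, map_sub, hEc, hxdef, hEφ a, hbdef, sub_self]
  obtain ⟨pd, hpd, hpd_eq⟩ := IsUCP.schwarz E hEucp d
  have hEdd : E (star d * d) = pd := by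
    rw [hpd_eq, hEd]
    simp
  have hxd : star x * x = star d * d + star d * c + (star c * d + star c * c) := by
    have hx : x = d + c := by rw [hddef]; abel
    rw [hx, star_add]
    noncomm_ring
  have hcc : E (star c * c) = star b * b := by
    have : star c * c = ιBC (star b * b) := by
      rw [hcdef, ← map_star, ← map_mul]
    rw [this, hEproj]
  have hExx : E (star x * x) = pd + star b * b := by
    rw [hxd, map_add, map_add, map_add, hEdd, hcc]
    have h1 : E (star d * c) = 0 := by
      rw [hcdef, hbimod' b d, hEd, star_zero, zero_mul]
    have h2 : E (star c * d) = 0 := by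
      rw [hcdef, hbimod b d, hEd, mul_zero]
    rw [h1, h2]
    abel
  obtain ⟨q, hq, hφs⟩ := IsUCP.schwarz φ hφucp a
  have hEφaa : E (φ (star a * a)) = star b * b := by
    rw [hEφ (star a * a), map_mul, map_star, ← hbdef]
  have hfin : pd + E q = 0 := by
    have h1 : E (φ (star a * a)) = E (star x * x) + E q := by
      rw [hφs, map_add, hxdef]
    rw [hEφaa, hExx] at h1
    have h2 : (pd + E q) + star b * b = star b * b := by
      conv_rhs => rw [h1]
      abel
    exact add_eq_right.mp h2
  have hpd0 : pd = 0 := SumSq.eq_zero hpd (IsUCP.map_sumSq E hEucp hq) hfin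
  have hEdd0 : E (star d * d) = 0 := by rw [hEdd, hpd0]
  have hd0 : d = 0 := hEfaith d hEdd0
  have hfinal : φ a = ιBC (ιAB a) := by
    have : x - c = 0 := hd0
    rw [sub_eq_zero] at this
    rw [← hxdef, this, hcdef, hbdef]
  simpa using hfinal
end

section
/- Let Γ be a discrete group and A ⊆ B a Γ-tight inclusion of Γ-operator algebras. Then the canonical inclusion A ⊆ Γ ⋉ B into the reduced crossed product is also Γ-tight. -/
open scoped BoundedContinuousFunction ENNReal

/-! ### Auxiliary: the completion of a C⋆-normed ring is a C⋆-algebra -/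

namespace CStarCompletionAux
open UniformSpace

variable {R : Type*} [NormedRing R] [StarRing R] [CStarRing R]

lemma ucstar : UniformContinuous (star : R → R) :=
  (star_isometry : Isometry (star : R → R)).uniformContinuous

noncomputable instance : StarRing (Completion R) where
  star x := Completion.map (star : R → R) x
  star_involutive x := by
    refine Completion.induction_on x ?_ fun r => ?_
    · exact isClosed_eq (Completion.continuous_map.comp Completion.continuous_map) continuous_id
    · show Completion.map star (Completion.map star ((r : R) : Completion R)) = _
      rw [Completion.map_coe ucstar, Completion.map_coe ucstar, star_star]
  star_add x y := by
    refine Completion.induction_on₂ x y ?_ fun r s => ?_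
    · exact isClosed_eq (Completion.continuous_map.comp continuous_add)
        (Continuous.add (f := fun x : Completion R × Completion R => Completion.map star x.1)
          (g := fun x : Completion R × Completion R => Completion.map star x.2)
          (Completion.continuous_map.comp continuous_fst)
          (Completion.continuous_map.comp continuous_snd))
    · show Completion.map star (((r : Completion R)) + ((s : Completion R))) =
        Completion.map star ((r : R) : Completion R) + Completion.map star ((s : R) : Completion R)
      rw [← Completion.coe_add, Completion.map_coe ucstar, Completion.map_coe ucstar,
        Completion.map_coe ucstar, star_add, Completion.coe_add]
  star_mul x y := by
    refine Completion.induction_on₂ x y ?_ fun r s => ?_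
    · exact isClosed_eq (Completion.continuous_map.comp continuous_mul)
        (Continuous.mul (f := fun x : Completion R × Completion R => Completion.map star x.2)
          (g := fun x : Completion R × Completion R => Completion.map star x.1)
          (Completion.continuous_map.comp continuous_snd)
          (Completion.continuous_map.comp continuous_fst))
    · show Completion.map star (((r : Completion R)) * ((s : Completion R))) =
        Completion.map star ((s : R) : Completion R) * Completion.map star ((r : R) : Completion R)
      rw [← Completion.coe_mul, Completion.map_coe ucstar, Completion.map_coe ucstar,
        Completion.map_coe ucstar, star_mul, Completion.coe_mul]

lemma coe_star (r : R) : ((star r : R) : Completion R) = star (r : Completion R) :=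
  (Completion.map_coe ucstar r).symm

lemma cont_star : Continuous (star : Completion R → Completion R) :=
  Completion.continuous_map

instance : NormedStarGroup (Completion R) where
  norm_star_le x := by
    refine Completion.induction_on x ?_ fun r => ?_
    · exact isClosed_le (continuous_norm.comp cont_star) continuous_norm
    · rw [← coe_star, Completion.norm_coe, Completion.norm_coe]
      exact (norm_star r).le

instance : CStarRing (Completion R) where
  norm_mul_self_le x := by
    refine Completion.induction_on x ?_ fun r => ?_
    · exact isClosed_le (continuous_norm.mul continuous_norm)
        (continuous_norm.comp ((cont_star).mul continuous_id))
    · rw [← coe_star, ← Completion.coe_mul, Completion.norm_coe, Completion.norm_coe]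
      exact CStarRing.norm_mul_self_le r

variable [NormedAlgebra ℂ R] [StarModule ℂ R]

noncomputable instance : NormedAlgebra ℂ (Completion R) where
  norm_smul_le := norm_smul_le

instance : StarModule ℂ (Completion R) where
  star_smul z x := by
    refine Completion.induction_on x ?_ fun r => ?_
    · exact isClosed_eq (cont_star.comp (continuous_const_smul z))
        ((continuous_const_smul _).comp cont_star)
    · rw [← Completion.coe_smul, ← coe_star, ← coe_star, ← Completion.coe_smul, star_smul]

noncomputable instance : CStarAlgebra (Completion R) := { }

/-- In a (possibly incomplete) C⋆-normed ring, a finite sum of elements of the form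
`star b * b` can only vanish if each summand vanishes. -/
theorem sum_star_mul_self_eq_zero {ι : Type*} [Fintype ι] (b : ι → R)
    (h : ∑ i, star (b i) * b i = 0) (i : ι) : b i = 0 := by
  letI := CStarAlgebra.spectralOrder (Completion R)
  haveI := CStarAlgebra.spectralOrderedRing (Completion R)
  have hc : ∑ k, star ((b k : Completion R)) * (b k : Completion R) = 0 := by
    have h2 := congrArg (Completion.coeRingHom (α := R)) h
    rw [map_sum, map_zero] at h2
    simpa [Completion.coeRingHom, ← coe_star, ← Completion.coe_mul] using h2
  have hnn : ∀ k ∈ Finset.univ, (0 : Completion R) ≤ star ((b k : Completion R)) * (b k) :=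
    fun k _ => star_mul_self_nonneg _
  have hzero := (Finset.sum_eq_zero_iff_of_nonneg hnn).mp hc i (Finset.mem_univ i)
  have hn : ‖(b i : Completion R)‖ * ‖(b i : Completion R)‖ = 0 := by
    rw [← CStarRing.norm_star_mul_self, hzero, norm_zero]
  have : ‖b i‖ = 0 := by
    have := mul_self_eq_zero.mp hn
    rwa [Completion.norm_coe] at this
  exact norm_eq_zero.mp this

end CStarCompletionAux

/-! ### Auxiliary: formal Kadison–Schwarz machinery for ucp maps -/

section Lemmas

variable {X Y Z : Type*} [Ring X] [StarRing X] [Algebra ℂ X]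
  [Ring Y] [StarRing Y] [Algebra ℂ Y] [Ring Z] [StarRing Z] [Algebra ℂ Z]

theorem ucp_comp {φ : X →ₗ[ℂ] Y} {ψ : Y →ₗ[ℂ] Z} (hφ : IsUCP φ) (hψ : IsUCP ψ) :
    IsUCP (ψ.comp φ) := by
  refine ⟨by simp [hφ.1, hψ.1], fun n M hM => ?_⟩
  have := hψ.2 n (M.map φ) (hφ.2 n M hM)
  rwa [Matrix.map_map, ← LinearMap.coe_comp] at this

theorem ucp_sq (ψ : X →ₗ[ℂ] Y) (h : IsUCP ψ) (y : X) :
    ∃ b : Y, ψ (star y * y) = star b * b := by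
  have hpos : StarPos (Matrix.of fun _ _ : Fin 1 => star y * y) :=
    ⟨Matrix.of fun _ _ : Fin 1 => y, by
      ext i j
      simp [Matrix.mul_apply, Matrix.star_apply]⟩
  obtain ⟨N, hN⟩ := h.2 1 _ hpos
  refine ⟨N 0 0, ?_⟩
  have := congrFun (congrFun hN 0) 0
  simpa [Matrix.map_apply, Matrix.mul_apply, Matrix.star_apply] using this

/-- The formal Gram-decomposition of the Kadison–Schwarz defect of a ucp map. -/
theorem ucp_gram (ψ : X →ₗ[ℂ] Y) (h : IsUCP ψ) {m : ℕ} (v : Fin m → X) :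
    ∃ M : Fin (m + 1) → Fin m → Y, ∀ i j,
      ψ (star (v i) * v j) = star (ψ (v i)) * ψ (v j) + ∑ k, star (M k i) * M k j := by
  classical
  set w : Fin (m + 1) → X := Fin.cons 1 v with hw
  have hpos : StarPos (Matrix.of fun i j : Fin (m + 1) => star (w i) * w j) := by
    refine ⟨Matrix.of fun k j : Fin (m + 1) => if k = 0 then w j else 0, ?_⟩
    ext i j
    simp only [Matrix.of_apply, Matrix.mul_apply, Matrix.conjTranspose_apply, Matrix.star_apply]
    rw [Finset.sum_eq_single (0 : Fin (m + 1))]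
    · simp
    · intro k _ hk; simp [hk]
    · simp
  obtain ⟨N, hN⟩ := h.2 (m + 1) _ hpos
  have hent : ∀ i j, ψ (star (w i) * w j) = ∑ k, star (N k i) * N k j := by
    intro i j
    have := congrFun (congrFun hN i) j
    simpa [Matrix.map_apply, Matrix.mul_apply, Matrix.star_apply] using this
  have hone : ∑ k, star (N k 0) * N k 0 = (1 : Y) := by
    have h00 := hent 0 0
    simp only [hw, Fin.cons_zero, star_one, one_mul, h.1] at h00
    exact h00.symm
  have hrow : ∀ i : Fin m, ∑ k, star (N k 0) * N k i.succ = ψ (v i) := by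
    intro i
    have h0i := hent 0 i.succ
    simp only [hw, Fin.cons_zero, Fin.cons_succ, star_one, one_mul] at h0i
    exact h0i.symm
  have hrow' : ∀ i : Fin m, ∑ k, star (N k i.succ) * N k 0 = star (ψ (v i)) := by
    intro i
    calc ∑ k, star (N k i.succ) * N k 0
        = star (∑ k, star (N k 0) * N k i.succ) := by
          rw [star_sum]
          exact Finset.sum_congr rfl fun k _ => by rw [star_mul, star_star]
      _ = star (ψ (v i)) := by rw [hrow i]
  refine ⟨fun k i => N k i.succ - N k 0 * ψ (v i), fun i j => ?_⟩
  have hterm : ∀ k : Fin (m + 1),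
      star (N k i.succ - N k 0 * ψ (v i)) * (N k j.succ - N k 0 * ψ (v j))
        = star (N k i.succ) * N k j.succ
          - (star (N k i.succ) * N k 0) * ψ (v j)
          - star (ψ (v i)) * (star (N k 0) * N k j.succ)
          + star (ψ (v i)) * ((star (N k 0) * N k 0) * ψ (v j)) := by
    intro k
    simp only [star_sub, star_mul]
    noncomm_ring
  have hsum : ∑ k, star (N k i.succ - N k 0 * ψ (v i)) * (N k j.succ - N k 0 * ψ (v j))
      = (∑ k, star (N k i.succ) * N k j.succ)
        - (∑ k, star (N k i.succ) * N k 0) * ψ (v j)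
        - star (ψ (v i)) * (∑ k, star (N k 0) * N k j.succ)
        + star (ψ (v i)) * ((∑ k, star (N k 0) * N k 0) * ψ (v j)) := by
    rw [Finset.sum_congr rfl fun k _ => hterm k]
    simp only [Finset.sum_add_distrib, Finset.sum_sub_distrib, ← Finset.sum_mul,
      ← Finset.mul_sum]
  have hvv : ∑ k, star (N k i.succ) * N k j.succ = ψ (star (v i) * v j) := by
    have hij := hent i.succ j.succ
    simp only [hw, Fin.cons_succ] at hij
    exact hij.symm
  rw [hsum, hvv, hrow, hrow', hone, one_mul]
  abel

end Lemmas

/-- If `A ⊆ B` is `Γ`-tight, then the canonical inclusion of `A` into the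
reduced crossed product `Γ ⋉ B` (a C*-algebra `CP` containing `B` equivariantly, with
canonical unitaries implementing the `Γ`-action and a faithful equivariant canonical
conditional expectation onto `B`) is `Γ`-tight. -/
theorem stmt_10 {Γ A B CP : Type*} [Group Γ]
    [NormedRing A] [StarRing A] [CStarRing A] [NormedAlgebra ℂ A] [StarModule ℂ A]
    [NormedRing B] [StarRing B] [CStarRing B] [NormedAlgebra ℂ B] [StarModule ℂ B]
    [NormedRing CP] [StarRing CP] [CStarRing CP] [NormedAlgebra ℂ CP] [StarModule ℂ CP]
    [MulSemiringAction Γ A] [MulSemiringAction Γ B] [MulSemiringAction Γ CP]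
    (ι : A →⋆ₐ[ℂ] B) (htight : IsTight Γ ι)
    (j : B →⋆ₐ[ℂ] CP) (hj_inj : Function.Injective j)
    (hj_eq : ∀ (g : Γ) (b : B), j (g • b) = g • j b)
    (u : Γ →* CPˣ)
    (hu_star : ∀ g : Γ, star ((u g : CP)) = (((u g)⁻¹ : CPˣ) : CP))
    (hAd : ∀ (g : Γ) (x : CP), g • x = (u g : CP) * x * (((u g)⁻¹ : CPˣ) : CP))
    (E₀ : CP →ₗ[ℂ] B) (hE₀ucp : IsUCP E₀) (hE₀eq : IsEquivariant Γ E₀)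
    (hE₀proj : ∀ b : B, E₀ (j b) = b)
    (hE₀faith : ∀ x : CP, E₀ (star x * x) = 0 → x = 0) :
    IsTight Γ (j.comp ι) := by
  intro φ hφ hφeq
  -- The compression `E₀ ∘ φ` is an equivariant ucp map `A → B`, hence equals `ι`.
  have hψucp : IsUCP (E₀.comp φ) := ucp_comp hφ hE₀ucp
  have hψeq : IsEquivariant Γ (E₀.comp φ) := fun g a => by
    simp only [LinearMap.comp_apply, hφeq g a, hE₀eq g (φ a)]
  have hψ := htight _ hψucp hψeq
  have hE : ∀ a : A, E₀ (φ a) = ι a := fun a => DFunLike.congr_fun hψ a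
  apply LinearMap.ext
  intro a
  show φ a = j (ι a)
  -- Schwarz defect decompositions.
  obtain ⟨Y, hY⟩ := ucp_gram φ hφ ![a]
  have hYa := hY 0 0
  simp only [Matrix.cons_val_zero] at hYa
  obtain ⟨W, hW⟩ := ucp_gram E₀ hE₀ucp ![φ a]
  have hWa := hW 0 0
  simp only [Matrix.cons_val_zero] at hWa
  choose V hV using fun k : Fin 2 => ucp_sq E₀ hE₀ucp (Y k 0)
  -- The total Schwarz defect of `E₀ ∘ φ` at `a` vanishes since `ι` is multiplicative.
  have key : (∑ l : Fin 2, star (W l 0) * W l 0) + (∑ k : Fin 2, star (V k) * V k) = 0 := by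
    have h1 : E₀ (φ (star a * a))
        = E₀ (star (φ a) * φ a) + ∑ k : Fin 2, star (V k) * V k := by
      rw [hYa, map_add, map_sum]
      congr 1
      exact Finset.sum_congr rfl fun k _ => hV k
    rw [hE (star a * a), map_mul, map_star, hWa, hE a, add_assoc] at h1
    exact left_eq_add.mp h1
  have hWzero : ∀ l : Fin 2, W l 0 = 0 := by
    have hsum : ∑ i : Fin 2 ⊕ Fin 2,
        star ((Sum.elim (fun l => W l 0) V) i) * (Sum.elim (fun l => W l 0) V) i = 0 := by
      rw [Fintype.sum_sum_type]
      simpa using key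
    intro l
    exact CStarCompletionAux.sum_star_mul_self_eq_zero _ hsum (Sum.inl l)
  -- Schwarz equality for `E₀` at `φ a`.
  have hSchw : E₀ (star (φ a) * φ a) = star (ι a) * ι a := by
    rw [hWa, hE a]
    simp [hWzero]
  -- Multiplicative-domain argument: the cross terms collapse.
  obtain ⟨M, hM⟩ := ucp_gram E₀ hE₀ucp ![φ a, j (ι a)]
  have h00 := hM 0 0
  have h01 := hM 0 1
  have h10 := hM 1 0
  simp only [Matrix.cons_val_zero, Matrix.cons_val_one, Matrix.head_cons] at h00 h01 h10
  have hMzero : ∀ k : Fin 3, M k 0 = 0 := by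
    apply CStarCompletionAux.sum_star_mul_self_eq_zero (fun k : Fin 3 => M k 0)
    rw [hSchw, hE a] at h00
    exact left_eq_add.mp h00
  have hEy : E₀ (j (ι a)) = ι a := hE₀proj (ι a)
  have hcross1 : E₀ (star (φ a) * j (ι a)) = star (ι a) * ι a := by
    rw [h01, hE a, hEy]
    simp [hMzero]
  have hcross2 : E₀ (star (j (ι a)) * φ a) = star (ι a) * ι a := by
    rw [h10, hE a, hEy]
    simp [hMzero]
  have hyy : E₀ (star (j (ι a)) * j (ι a)) = star (ι a) * ι a := by
    rw [← map_star, ← map_mul, hE₀proj]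
  -- Conclude by faithfulness of `E₀`.
  have hexp : star (φ a - j (ι a)) * (φ a - j (ι a))
      = star (φ a) * φ a - star (φ a) * j (ι a) - star (j (ι a)) * φ a
        + star (j (ι a)) * j (ι a) := by
    simp only [star_sub]
    noncomm_ring
  have hxx : E₀ (star (φ a - j (ι a)) * (φ a - j (ι a))) = 0 := by
    rw [hexp, map_add, map_sub, map_sub, hSchw, hcross1, hcross2, hyy]
    abel
  exact sub_eq_zero.mp (hE₀faith _ hxx)
end

section
/- Let Γ be a countable discrete group, Λ ≤ Γ, and X a minimal compact Γ-space containing a Λ-fixed point x₀ such that δ_{x₀} is the unique Λ-invariant probability measure on X. Then the inclusion P_{δ_{x₀}}(C(X)) ⊆ ℓ∞(Γ/Λ) given by the Poisson transform is Γ-tight: the unique Γ-equivariant unital positive map C(X) → ℓ∞(Γ/Λ) is P_{δ_{x₀}}, where P_{δ_{x₀}}(f)(gΛ) = f(g x₀). -/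
open scoped BoundedContinuousFunction ENNReal

open MeasureTheory

/-- Left translation action of `Γ` on `ℓ∞(Γ/Λ)`. -/
noncomputable def lTransQ {Γ : Type*} [Group Γ] [TopologicalSpace Γ] (Λ : Subgroup Γ)
    [DiscreteTopology (Γ ⧸ Λ)] (g : Γ) (f : (Γ ⧸ Λ) →ᵇ ℂ) : (Γ ⧸ Λ) →ᵇ ℂ :=
  f.compContinuous ⟨fun x => g⁻¹ • x, continuous_of_discreteTopology⟩

section RMKAux

noncomputable section

open MeasureTheory TopologicalSpace Set NNReal ENNReal BoundedContinuousFunction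

variable {X : Type*} [TopologicalSpace X] [CompactSpace X] [T2Space X]

noncomputable def cplx (f : C(X, ℝ)) : C(X, ℂ) :=
  ⟨fun x => (f x : ℂ), Complex.continuous_ofReal.comp f.continuous⟩

@[simp] lemma cplx_apply (f : C(X,ℝ)) (x : X) : cplx f x = (f x : ℂ) := rfl

noncomputable def phir (φ : C(X,ℂ) →ₗ[ℂ] ℂ) (f : C(X,ℝ)) : ℝ := (φ (cplx f)).re

section State

variable (φ : C(X,ℂ) →ₗ[ℂ] ℂ)

lemma phi_nonneg (hφpos : ∀ a, StarPos a → StarPos (φ a))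
    (f : C(X,ℝ)) (hf : (0:C(X,ℝ)) ≤ f) : ∃ r : ℝ, 0 ≤ r ∧ φ (cplx f) = r := by
  have hf' : ∀ x, 0 ≤ f x := fun x => by
    have := ContinuousMap.le_def.mp hf x; simpa using this
  have hsp : StarPos (cplx f) := by
    refine ⟨cplx ⟨fun x => Real.sqrt (f x), Real.continuous_sqrt.comp f.continuous⟩, ?_⟩
    ext x
    simp only [cplx_apply, ContinuousMap.mul_apply, ContinuousMap.star_apply,
      ContinuousMap.coe_mk, Complex.star_def]
    rw [Complex.conj_ofReal]
    norm_cast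
    exact (Real.mul_self_sqrt (hf' x)).symm
  obtain ⟨c, hc⟩ := hφpos _ hsp
  refine ⟨‖c‖^2, by positivity, ?_⟩
  rw [hc, Complex.star_def, Complex.conj_mul']
  norm_cast

lemma phi_eq_phir (hφ1 : φ 1 = 1) (hφpos : ∀ a, StarPos a → StarPos (φ a))
    (f : C(X,ℝ)) : φ (cplx f) = (phir φ f : ℂ) := by
  set c : ℝ := ‖f‖ with hc
  have h0 : (0:C(X,ℝ)) ≤ f + ContinuousMap.const X c := by
    rw [ContinuousMap.le_def]
    intro x
    have h1 := ContinuousMap.norm_coe_le_norm f x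
    have h2 := abs_le.mp (by simpa [Real.norm_eq_abs] using h1)
    simp only [ContinuousMap.add_apply, ContinuousMap.const_apply, ContinuousMap.zero_apply]
    linarith [h2.1]
  obtain ⟨r, _, hr⟩ := phi_nonneg φ hφpos _ h0
  have hsplit : cplx (f + ContinuousMap.const X c) = cplx f + (c:ℂ) • 1 := by
    ext x; simp
  rw [hsplit, map_add, _root_.map_smul, hφ1, smul_eq_mul, mul_one] at hr
  have h2 : φ (cplx f) = ((r - c : ℝ) : ℂ) := by push_cast; linear_combination hr
  rw [phir, h2, Complex.ofReal_re]

lemma phir_add (f g : C(X,ℝ)) : phir φ (f + g) = phir φ f + phir φ g := by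
  unfold phir
  have : cplx (f+g) = cplx f + cplx g := by ext x; simp
  rw [this, map_add, Complex.add_re]

lemma phir_smul (a : ℝ) (f : C(X,ℝ)) : phir φ (a • f) = a * phir φ f := by
  unfold phir
  have : cplx (a • f) = (a:ℂ) • cplx f := by ext x; simp
  rw [this, _root_.map_smul, smul_eq_mul, Complex.mul_re]
  simp

lemma phir_nonneg (hφpos : ∀ a, StarPos a → StarPos (φ a))
    (f : C(X,ℝ)) (hf : (0:C(X,ℝ)) ≤ f) : 0 ≤ phir φ f := by
  obtain ⟨r, hr0, hr⟩ := phi_nonneg φ hφpos f hf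
  unfold phir; rw [hr]; simpa using hr0

lemma phir_mono (hφpos : ∀ a, StarPos a → StarPos (φ a))
    {f g : C(X,ℝ)} (h : f ≤ g) : phir φ f ≤ phir φ g := by
  have h0 : (0:C(X,ℝ)) ≤ g - f := by
    rw [ContinuousMap.le_def]; intro x
    have := ContinuousMap.le_def.mp h x; simpa using this
  have := phir_nonneg φ hφpos _ h0
  have hadd := phir_add φ f (g - f)
  simp only [add_sub_cancel] at hadd
  linarith

lemma phir_one (hφ1 : φ 1 = 1) : phir φ (1 : C(X,ℝ)) = 1 := by
  unfold phir
  have : cplx (1 : C(X,ℝ)) = 1 := by ext x; simp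
  rw [this, hφ1]; simp

end State

noncomputable def toRealCM (h : CompactlySupportedContinuousMap X ℝ≥0) : C(X, ℝ) :=
  ⟨fun x => (h x : ℝ), NNReal.continuous_coe.comp h.continuous⟩

@[simp] lemma toRealCM_apply (h : CompactlySupportedContinuousMap X ℝ≥0) (x : X) : toRealCM h x = (h x : ℝ) := rfl

lemma toRealCM_nonneg (h : CompactlySupportedContinuousMap X ℝ≥0) : (0:C(X,ℝ)) ≤ toRealCM h := by
  rw [ContinuousMap.le_def]; intro x; simp

noncomputable def nnCM (p : C(X,ℝ)) : CompactlySupportedContinuousMap X ℝ≥0 :=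
  ⟨⟨fun x => (p x).toNNReal, continuous_real_toNNReal.comp p.continuous⟩,
    HasCompactSupport.of_compactSpace _⟩

@[simp] lemma nnCM_apply (p : C(X,ℝ)) (x : X) : nnCM p x = (p x).toNNReal := rfl

lemma toRealCM_nnCM (p : C(X,ℝ)) (hp : (0:C(X,ℝ)) ≤ p) : toRealCM (nnCM p) = p := by
  ext x
  simp only [toRealCM_apply, nnCM_apply]
  exact Real.coe_toNNReal _ (by simpa using ContinuousMap.le_def.mp hp x)

noncomputable def oneCc : CompactlySupportedContinuousMap X ℝ≥0 :=
  ⟨1, HasCompactSupport.of_compactSpace _⟩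

@[simp] lemma oneCc_apply (x : X) : (oneCc : CompactlySupportedContinuousMap X ℝ≥0) x = 1 := rfl

noncomputable def ccComp (h : CompactlySupportedContinuousMap X ℝ≥0) (c : C(X, X)) :
    CompactlySupportedContinuousMap X ℝ≥0 :=
  ⟨h.toContinuousMap.comp c, HasCompactSupport.of_compactSpace _⟩

@[simp] lemma ccComp_apply (h : CompactlySupportedContinuousMap X ℝ≥0) (c : C(X, X)) (x : X) :
    ccComp h c x = h (c x) := rfl

lemma content_apply_eq_coe_toFun (μ : MeasureTheory.Content X) (K : Compacts X) :
    μ K = (μ.toFun K : ℝ≥0∞) := rfl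

section Lam

variable (φ : C(X,ℂ) →ₗ[ℂ] ℂ)

noncomputable def lamNN (hφpos : ∀ a, StarPos a → StarPos (φ a)) :
    (CompactlySupportedContinuousMap X ℝ≥0) →ₗ[ℝ≥0] ℝ≥0 where
  toFun h := ⟨phir φ (toRealCM h), phir_nonneg φ hφpos _ (toRealCM_nonneg h)⟩
  map_add' f g := by
    apply NNReal.coe_injective
    have : toRealCM (f + g) = toRealCM f + toRealCM g := by ext x; simp
    simp [this, phir_add]
    rfl
  map_smul' c f := by
    apply NNReal.coe_injective
    have : toRealCM (c • f) = (c:ℝ) • toRealCM f := by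
      ext x; simp [NNReal.smul_def]
    simp [this, phir_smul, NNReal.smul_def]
    rfl

variable (hφ1 : φ 1 = 1) (hφpos : ∀ a, StarPos a → StarPos (φ a))

lemma lamNN_apply (h : CompactlySupportedContinuousMap X ℝ≥0) : (lamNN φ hφpos h : ℝ) = phir φ (toRealCM h) := rfl

lemma lamNN_mono {f g : CompactlySupportedContinuousMap X ℝ≥0} (h : ∀ x, f x ≤ g x) :
    lamNN φ hφpos f ≤ lamNN φ hφpos g := by
  rw [← NNReal.coe_le_coe, lamNN_apply, lamNN_apply]
  exact phir_mono φ hφpos (ContinuousMap.le_def.mpr fun x => by simpa using h x)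

include hφ1 in
lemma lamNN_one : lamNN φ hφpos (oneCc : CompactlySupportedContinuousMap X ℝ≥0) = 1 := by
  apply NNReal.coe_injective
  rw [lamNN_apply]
  have : toRealCM (oneCc : CompactlySupportedContinuousMap X ℝ≥0) = 1 := by ext x; simp
  rw [this, phir_one φ hφ1]; simp

noncomputable def rieszC : MeasureTheory.Content X where
  toFun := rieszContentAux (lamNN φ hφpos)
  mono' := fun _ _ h => rieszContentAux_mono _ h
  sup_le' := fun K₁ K₂ => rieszContentAux_sup_le _ K₁ K₂
  sup_disjoint' := by
    intro K₁ K₂ hdis hcl₁ hcl₂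
    refine le_antisymm (rieszContentAux_sup_le _ K₁ K₂) ?_
    apply le_csInf (rieszContentAux_image_nonempty _ _)
    rintro b ⟨f, hf, rfl⟩
    obtain ⟨u, hu0, hu1, hu01⟩ := exists_continuous_zero_one_of_isClosed hcl₁ hcl₂ hdis
    set p : C(X,ℝ) := toRealCM f * (1 - u) with hp
    set q : C(X,ℝ) := toRealCM f * u with hq
    have hppos : (0:C(X,ℝ)) ≤ p := by
      rw [ContinuousMap.le_def]; intro x
      have := (hu01 x).2
      have hf0 : (0:ℝ) ≤ f x := (f x).2
      simp only [hp, ContinuousMap.mul_apply, ContinuousMap.sub_apply,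
        ContinuousMap.one_apply, ContinuousMap.zero_apply, toRealCM_apply]
      nlinarith
    have hqpos : (0:C(X,ℝ)) ≤ q := by
      rw [ContinuousMap.le_def]; intro x
      have := (hu01 x).1
      have hf0 : (0:ℝ) ≤ f x := (f x).2
      simp only [hq, ContinuousMap.mul_apply, ContinuousMap.zero_apply, toRealCM_apply]
      nlinarith
    have hK₁ : rieszContentAux (lamNN φ hφpos) K₁ ≤ lamNN φ hφpos (nnCM p) := by
      apply rieszContentAux_le
      intro x hx
      rw [← NNReal.coe_le_coe]
      simp only [nnCM_apply]
      rw [Real.coe_toNNReal _ (by simpa using ContinuousMap.le_def.mp hppos x)]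
      have h1f : (1:ℝ) ≤ f x := by
        have := hf x (Or.inl hx); exact_mod_cast this
      have : u x = 0 := hu0 hx
      simp only [hp, ContinuousMap.mul_apply, ContinuousMap.sub_apply,
        ContinuousMap.one_apply, toRealCM_apply, this]
      push_cast
      nlinarith
    have hK₂ : rieszContentAux (lamNN φ hφpos) K₂ ≤ lamNN φ hφpos (nnCM q) := by
      apply rieszContentAux_le
      intro x hx
      rw [← NNReal.coe_le_coe]
      simp only [nnCM_apply]
      rw [Real.coe_toNNReal _ (by simpa using ContinuousMap.le_def.mp hqpos x)]
      have h1f : (1:ℝ) ≤ f x := by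
        have := hf x (Or.inr hx); exact_mod_cast this
      have : u x = 1 := hu1 hx
      simp only [hq, ContinuousMap.mul_apply, toRealCM_apply, this]
      push_cast
      nlinarith
    have hsum : lamNN φ hφpos (nnCM p) + lamNN φ hφpos (nnCM q) = lamNN φ hφpos f := by
      apply NNReal.coe_injective
      rw [NNReal.coe_add, lamNN_apply, lamNN_apply, lamNN_apply,
        toRealCM_nnCM p hppos, toRealCM_nnCM q hqpos, ← phir_add]
      congr 1
      ext x
      simp only [ContinuousMap.add_apply, hp, hq, ContinuousMap.mul_apply,
        ContinuousMap.sub_apply, ContinuousMap.one_apply, toRealCM_apply]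
      ring
    calc rieszContentAux (lamNN φ hφpos) K₁ + rieszContentAux (lamNN φ hφpos) K₂
        ≤ lamNN φ hφpos (nnCM p) + lamNN φ hφpos (nnCM q) := add_le_add hK₁ hK₂
      _ = lamNN φ hφpos f := hsum

end Lam

section Key

variable [MeasurableSpace X] [BorelSpace X]

theorem key_state_eq_dirac {ι : Type*} (e : ι → X ≃ₜ X) (x₀ : X)
    (huniq : ∀ η : Measure X, IsProbabilityMeasure η →
      (∀ i, Measure.map (e i) η = η) → η = Measure.dirac x₀)
    (φ : C(X,ℂ) →ₗ[ℂ] ℂ) (hφ1 : φ 1 = 1) (hφpos : ∀ a, StarPos a → StarPos (φ a))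
    (hφinv : ∀ i (f : C(X,ℂ)), φ (f.comp ((e i : X ≃ₜ X) : C(X, X))) = φ f)
    (hφinv' : ∀ i (f : C(X,ℂ)), φ (f.comp ((e i).symm : C(X, X))) = φ f)
    (f : C(X,ℂ)) : φ f = f x₀ := by
  classical
  set Λ' := lamNN φ hφpos with hΛ'
  -- invariance of Λ' under composition with continuous maps fixing φ
  have hlam_comp : ∀ (c : C(X,X)), (∀ q : C(X,ℂ), φ (q.comp c) = φ q) →
      ∀ h : CompactlySupportedContinuousMap X ℝ≥0, Λ' (ccComp h c) = Λ' h := by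
    intro c hq h
    apply NNReal.coe_injective
    rw [hΛ', lamNN_apply, lamNN_apply]
    have h1 : toRealCM (ccComp h c) = (toRealCM h).comp c := by ext x; rfl
    have h2 : cplx ((toRealCM h).comp c) = (cplx (toRealCM h)).comp c := by ext x; rfl
    rw [h1]
    unfold phir
    rw [h2, hq]
  -- the content and its measure
  set C : MeasureTheory.Content X := rieszC φ hφpos with hC
  set μ : Measure X := C.measure with hμ
  have hCfun : ∀ K : Compacts X, C.toFun K = rieszContentAux Λ' K := fun K => rfl
  -- content of compacts is invariant
  have hCmap : ∀ (i : ι) (K : Compacts X),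
      C.toFun (K.map (e i) (e i).continuous) = C.toFun K := by
    intro i K
    rw [hCfun, hCfun]
    unfold rieszContentAux
    apply le_antisymm
    · apply le_csInf (rieszContentAux_image_nonempty _ _)
      rintro b ⟨g, hg, rfl⟩
      have hmem : (ccComp g ((e i).symm : C(X, X))) ∈
          {f : CompactlySupportedContinuousMap X ℝ≥0 | ∀ x ∈ K.map (e i) (e i).continuous, 1 ≤ f x} := by
        intro x hx
        have hx' : x ∈ ((e i) '' (K : Set X)) := by
          rw [← Compacts.coe_map (e i).continuous K]; exact hx
        obtain ⟨y, hy, rfl⟩ := hx'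
        simpa using hg y hy
      calc sInf (Λ' '' {f : CompactlySupportedContinuousMap X ℝ≥0 | ∀ x ∈ K.map (e i) (e i).continuous, 1 ≤ f x})
          ≤ Λ' (ccComp g ((e i).symm : C(X, X))) :=
            csInf_le (OrderBot.bddBelow _) ⟨_, hmem, rfl⟩
        _ = Λ' g := hlam_comp _ (hφinv' i) g
    · apply le_csInf (rieszContentAux_image_nonempty _ _)
      rintro b ⟨g, hg, rfl⟩
      have hmem : (ccComp g ((e i : X ≃ₜ X) : C(X, X))) ∈
          {f : CompactlySupportedContinuousMap X ℝ≥0 | ∀ x ∈ K, 1 ≤ f x} := by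
        intro x hx
        have : (e i) x ∈ (K.map (e i) (e i).continuous : Set X) := by
          rw [Compacts.coe_map]; exact ⟨x, hx, rfl⟩
        simpa using hg _ this
      calc sInf (Λ' '' {f : CompactlySupportedContinuousMap X ℝ≥0 | ∀ x ∈ K, 1 ≤ f x})
          ≤ Λ' (ccComp g ((e i : X ≃ₜ X) : C(X, X))) :=
            csInf_le (OrderBot.bddBelow _) ⟨_, hmem, rfl⟩
        _ = Λ' g := hlam_comp _ (hφinv i) g
  have hCmap' : ∀ (i : ι), ∀ ⦃K : Compacts X⦄,
      C (K.map (e i) (e i).continuous) = C K := by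
    intro i K
    rw [content_apply_eq_coe_toFun, content_apply_eq_coe_toFun,
      hCmap i K]
  -- μ is a probability measure
  have hμuniv : μ univ = 1 := by
    rw [hμ, C.measure_apply MeasurableSet.univ, C.outerMeasure_of_isOpen univ isOpen_univ,
      C.innerContent_of_isCompact isCompact_univ isOpen_univ,
      content_apply_eq_coe_toFun]
    norm_cast
    rw [hCfun]
    apply le_antisymm
    · have : (oneCc : CompactlySupportedContinuousMap X ℝ≥0) ∈ {f : CompactlySupportedContinuousMap X ℝ≥0 | ∀ x ∈ (⟨univ, isCompact_univ⟩ : Compacts X),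
          1 ≤ f x} := by intro x _; simp
      calc rieszContentAux Λ' ⟨univ, isCompact_univ⟩ ≤ Λ' oneCc := rieszContentAux_le Λ' this
        _ = 1 := lamNN_one φ hφ1 hφpos
    · apply le_csInf (rieszContentAux_image_nonempty _ _)
      rintro b ⟨g, hg, rfl⟩
      calc (1:ℝ≥0) = Λ' oneCc := (lamNN_one φ hφ1 hφpos).symm
        _ ≤ Λ' g := lamNN_mono φ hφpos (fun x => by simpa using hg x (mem_univ x))
  have hμprob : IsProbabilityMeasure μ := ⟨hμuniv⟩
  -- μ is invariant
  have hμinv : ∀ i, Measure.map (e i) μ = μ := by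
    intro i
    ext s hs
    rw [Measure.map_apply (e i).continuous.measurable hs, hμ,
      C.measure_apply (hs.preimage (e i).continuous.measurable), C.measure_apply hs]
    exact C.outerMeasure_preimage (e i) (hCmap' i) s
  have hdirac : μ = Measure.dirac x₀ := huniq μ hμprob hμinv
  -- content of compacts avoiding x₀ vanishes
  have hK0 : ∀ K : Compacts X, x₀ ∉ (K : Set X) → rieszContentAux Λ' K = 0 := by
    intro K hK
    have h1 : (C K : ℝ≥0∞) ≤ μ {x₀}ᶜ := by
      rw [hμ, C.measure_apply (MeasurableSet.singleton x₀).compl,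
        C.outerMeasure_of_isOpen _ isOpen_compl_singleton]
      exact C.le_innerContent K ⟨{x₀}ᶜ, isOpen_compl_singleton⟩
        (fun x hx => by simp; rintro rfl; exact hK hx)
    have h2 : μ ({x₀}ᶜ) = 0 := by
      rw [hdirac, Measure.dirac_apply' _ (MeasurableSet.singleton x₀).compl]
      simp
    rw [h2] at h1
    have := le_antisymm h1 zero_le
    rw [content_apply_eq_coe_toFun] at this
    exact_mod_cast this
  -- Step A : nonneg functions vanishing near x₀ have phir zero
  have stepA : ∀ g : C(X,ℝ), (0:C(X,ℝ)) ≤ g →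
      (∃ V : Set X, IsOpen V ∧ x₀ ∈ V ∧ ∀ x ∈ V, g x = 0) → phir φ g = 0 := by
    intro g hg ⟨V, hVopen, hx₀V, hgV⟩
    have hg' : ∀ x, 0 ≤ g x := fun x => by simpa using ContinuousMap.le_def.mp hg x
    set K : Compacts X := ⟨closure {x | g x ≠ 0}, isClosed_closure.isCompact⟩ with hKdef
    have hsub : {x | g x ≠ 0} ⊆ Vᶜ := fun x hx hxV => hx (hgV x hxV)
    have hclsub : closure {x | g x ≠ 0} ⊆ Vᶜ :=
      closure_minimal hsub (hVopen.isClosed_compl)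
    have hx₀K : x₀ ∉ (K : Set X) := fun h => hclsub h hx₀V
    have hK0' := hK0 K hx₀K
    have hmain : ∀ ε : ℝ, 0 < ε → phir φ g ≤ ε := by
      intro ε hε
      set M : ℝ := ‖g‖ + 1 with hM
      have hM0 : 0 < M := by positivity
      set δ : ℝ≥0 := ⟨ε / M, le_of_lt (by positivity)⟩ with hδ
      have hδ0 : 0 < δ := by
        rw [← NNReal.coe_pos]; show (0:ℝ) < ε / M; positivity
      obtain ⟨h, hh1, hh2⟩ := exists_lt_rieszContentAux_add_pos Λ' K hδ0
      rw [hK0', zero_add] at hh2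
      have hle : g ≤ M • toRealCM h := by
        rw [ContinuousMap.le_def]
        intro x
        by_cases hx : x ∈ (K : Set X)
        · have h1x : (1:ℝ) ≤ h x := by exact_mod_cast hh1 x hx
          have : g x ≤ ‖g‖ := by
            have := ContinuousMap.norm_coe_le_norm g x
            rw [Real.norm_eq_abs] at this
            exact (abs_le.mp this).2
          simp only [ContinuousMap.smul_apply, toRealCM_apply, smul_eq_mul]
          nlinarith
        · have : g x = 0 := by
            by_contra hne
            exact hx (subset_closure hne)
          simp only [this, ContinuousMap.smul_apply, toRealCM_apply, smul_eq_mul]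
          positivity
      have := phir_mono φ hφpos hle
      rw [phir_smul] at this
      have hlam : phir φ (toRealCM h) = (Λ' h : ℝ) := rfl
      have hΛh : (Λ' h : ℝ) < δ := by exact_mod_cast hh2
      have : phir φ g ≤ M * (Λ' h : ℝ) := by rwa [hlam] at this
      have hMδ : M * (δ:ℝ) = ε := by
        rw [hδ]; show M * (ε / M) = ε; field_simp
      nlinarith [hΛh, hM0]
    have hge : 0 ≤ phir φ g := phir_nonneg φ hφpos g hg
    by_contra hne
    have hlt : 0 < phir φ g := lt_of_le_of_ne hge (Ne.symm hne)
    have := hmain (phir φ g / 2) (by linarith)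
    linarith
  -- Step B : nonneg functions vanishing at x₀ have phir zero
  have stepB : ∀ g : C(X,ℝ), (0:C(X,ℝ)) ≤ g → g x₀ = 0 → phir φ g = 0 := by
    intro g hg hgx
    have hg' : ∀ x, 0 ≤ g x := fun x => by simpa using ContinuousMap.le_def.mp hg x
    have hmain : ∀ ε : ℝ, 0 < ε → phir φ g ≤ ε := by
      intro ε hε
      set U : Set X := {x | g x < ε} with hU
      have hUopen : IsOpen U := isOpen_lt g.continuous continuous_const
      have hx₀U : x₀ ∈ U := by simp [hU, hgx, hε]
      have hdis : Disjoint ({x₀} : Set X) Uᶜ := by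
        rw [Set.disjoint_left]; rintro x rfl hx; exact hx hx₀U
      obtain ⟨V, W, hVo, hWo, hxV, hUW, hVW⟩ :=
        NormalSpace.normal {x₀} Uᶜ isClosed_singleton hUopen.isClosed_compl hdis
      have hclV : closure V ⊆ Wᶜ :=
        closure_minimal (Set.disjoint_left.mp hVW) hWo.isClosed_compl
      have hdis2 : Disjoint (closure V) Uᶜ := by
        rw [Set.disjoint_left]
        intro x hx hxU
        exact hclV hx (hUW hxU)
      obtain ⟨u, hu0, hu1, hu01⟩ :=
        exists_continuous_zero_one_of_isClosed isClosed_closure hUopen.isClosed_compl hdis2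
      have hphiu : phir φ u = 0 := by
        apply stepA u
        · rw [ContinuousMap.le_def]; intro x; simpa using (hu01 x).1
        · exact ⟨V, hVo, hxV rfl, fun x hx => hu0 (subset_closure hx)⟩
      have hle : g ≤ ε • (1:C(X,ℝ)) + ‖g‖ • u := by
        rw [ContinuousMap.le_def]
        intro x
        simp only [ContinuousMap.add_apply, ContinuousMap.smul_apply,
          ContinuousMap.one_apply, smul_eq_mul, mul_one]
        by_cases hx : x ∈ U
        · have : g x < ε := hx
          have h1 := (hu01 x).1
          have h2 : 0 ≤ ‖g‖ := norm_nonneg g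
          nlinarith
        · have hux : u x = 1 := hu1 hx
          have : g x ≤ ‖g‖ := by
            have := ContinuousMap.norm_coe_le_norm g x
            rw [Real.norm_eq_abs] at this
            exact (abs_le.mp this).2
          rw [hux]
          linarith
      have := phir_mono φ hφpos hle
      rw [phir_add, phir_smul, phir_smul, phir_one φ hφ1, hphiu] at this
      linarith
    have hge : 0 ≤ phir φ g := phir_nonneg φ hφpos g hg
    by_contra hne
    have hlt : 0 < phir φ g := lt_of_le_of_ne hge (Ne.symm hne)
    have := hmain (phir φ g / 2) (by linarith)
    linarith
  -- phir of any real function is evaluation at x₀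
  have hphir_eval : ∀ g : C(X,ℝ), phir φ g = g x₀ := by
    intro g
    set c : ℝ := g x₀ with hc
    set g' : C(X,ℝ) := g - c • (1:C(X,ℝ)) with hg'
    have hg'x : g' x₀ = 0 := by simp [hg', hc]
    set p : C(X,ℝ) := g' ⊔ 0 with hp
    set n : C(X,ℝ) := (-g') ⊔ 0 with hn
    have hp0 : (0:C(X,ℝ)) ≤ p := by
      rw [ContinuousMap.le_def]; intro x
      simp [hp, ContinuousMap.sup_apply, le_max_right]
    have hn0 : (0:C(X,ℝ)) ≤ n := by
      rw [ContinuousMap.le_def]; intro x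
      simp [hn, ContinuousMap.sup_apply, le_max_right]
    have hpx : p x₀ = 0 := by
      simp [hp, ContinuousMap.sup_apply, hg'x]
    have hnx : n x₀ = 0 := by
      simp [hn, ContinuousMap.sup_apply, hg'x]
    have hpn : p - n = g' := by
      ext x
      simp only [ContinuousMap.sub_apply, hp, hn, ContinuousMap.sup_apply,
        ContinuousMap.neg_apply, ContinuousMap.zero_apply]
      rcases le_total (g' x) 0 with h | h
      · rw [max_eq_right h, max_eq_left (by linarith)]; ring
      · rw [max_eq_left h, max_eq_right (by linarith)]; ring
    have hphig' : phir φ g' = 0 := by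
      have h1 : phir φ p = 0 := stepB p hp0 hpx
      have h2 : phir φ n = 0 := stepB n hn0 hnx
      have h3 := phir_add φ (p - n) n
      rw [sub_add_cancel] at h3
      rw [hpn] at h3
      linarith
    have h4 := phir_add φ g' (c • (1:C(X,ℝ)))
    rw [hg'] at h4
    rw [sub_add_cancel] at h4
    rw [← hg'] at h4
    rw [hphig', phir_smul, phir_one φ hφ1] at h4
    simpa using h4
  -- conclude for complex functions
  set fr : C(X,ℝ) := ⟨fun x => (f x).re, Complex.continuous_re.comp f.continuous⟩ with hfr
  set fi : C(X,ℝ) := ⟨fun x => (f x).im, Complex.continuous_im.comp f.continuous⟩ with hfi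
  have hsplit : f = cplx fr + Complex.I • cplx fi := by
    ext x
    simp only [ContinuousMap.add_apply, ContinuousMap.smul_apply, cplx_apply, hfr, hfi,
      ContinuousMap.coe_mk, smul_eq_mul]
    rw [mul_comm]
    exact (Complex.re_add_im (f x)).symm
  rw [hsplit, map_add, _root_.map_smul, phi_eq_phir φ hφ1 hφpos, phi_eq_phir φ hφ1 hφpos,
    hphir_eval, hphir_eval]
  simp only [ContinuousMap.add_apply, ContinuousMap.smul_apply, cplx_apply, hfr, hfi,
    ContinuousMap.coe_mk, smul_eq_mul]
  try rw [mul_comm]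
  try exact Complex.re_add_im (f x₀)

end Key

end
end RMKAux

section Glue

open MeasureTheory TopologicalSpace Set NNReal ENNReal BoundedContinuousFunction

noncomputable def eΛ {Γ X : Type*} [Group Γ] (Λ : Subgroup Γ) [TopologicalSpace X] [MulAction Γ X]
    (hc : ∀ g : Γ, Continuous fun x : X => g • x) (i : Λ) : X ≃ₜ X where
  toFun := fun x => (i:Γ) • x
  invFun := fun x => (i:Γ)⁻¹ • x
  left_inv := fun x => by simp
  right_inv := fun x => by simp
  continuous_toFun := hc (i:Γ)
  continuous_invFun := hc (i:Γ)⁻¹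

end Glue

/-- Let `Γ` be a countable discrete group, `Λ ≤ Γ`, and `X` a minimal compact
`Γ`-space with a `Λ`-fixed point `x₀` such that `δ_{x₀}` is the unique `Λ`-invariant
probability measure on `X`. Then the unique `Γ`-equivariant unital positive map
`C(X) → ℓ∞(Γ/Λ)` is the Poisson transform `P_{δ_{x₀}} f (gΛ) = f (g • x₀)`; i.e. the
inclusion `P_{δ_{x₀}}(C(X)) ⊆ ℓ∞(Γ/Λ)` is `Γ`-tight. -/
theorem stmt_17 {Γ X : Type*} [Group Γ] [Countable Γ]
    [TopologicalSpace Γ] [DiscreteTopology Γ]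
    (Λ : Subgroup Γ) [DiscreteTopology (Γ ⧸ Λ)]
    [TopologicalSpace X] [CompactSpace X] [T2Space X] [MeasurableSpace X] [BorelSpace X]
    [MulAction Γ X] (hc : ∀ g : Γ, Continuous fun x : X => g • x)
    -- minimality:
    (hmin : ∀ x : X, Dense (MulAction.orbit Γ x))
    -- the `Λ`-fixed point:
    (x₀ : X) (hfix : ∀ l ∈ Λ, l • x₀ = x₀)
    -- `δ_{x₀}` is the unique `Λ`-invariant probability measure on `X`:
    (huniq : ∀ η : Measure X, IsProbabilityMeasure η →
      (∀ l ∈ Λ, Measure.map (fun x : X => l • x) η = η) → η = Measure.dirac x₀)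
    -- `ψ` is any `Γ`-equivariant unital positive map `C(X) → ℓ∞(Γ/Λ)`:
    (ψ : C(X, ℂ) →ₗ[ℂ] ((Γ ⧸ Λ) →ᵇ ℂ)) (hψ : IsUP ψ)
    (hψeq : ∀ (g : Γ) (f : C(X, ℂ)),
      ψ (f.comp ⟨fun x => g⁻¹ • x, hc g⁻¹⟩) = lTransQ Λ g (ψ f)) :
    ∀ (f : C(X, ℂ)) (g : Γ), ψ f (QuotientGroup.mk g) = f (g • x₀) := by
  intro f g
  let ev : ((Γ ⧸ Λ) →ᵇ ℂ) →ₗ[ℂ] ℂ :=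
    { toFun := fun b => b (QuotientGroup.mk (1:Γ))
      map_add' := fun a b => rfl
      map_smul' := fun c b => rfl }
  set φ : C(X,ℂ) →ₗ[ℂ] ℂ := ev.comp ψ with hφdef
  have hφapp : ∀ q : C(X,ℂ), φ q = ψ q (QuotientGroup.mk (1:Γ)) := fun q => rfl
  have hφ1 : φ 1 = 1 := by rw [hφapp, hψ.1]; rfl
  have hφpos : ∀ a, StarPos a → StarPos (φ a) := by
    intro a ha
    obtain ⟨b, hb⟩ := hψ.2 a ha
    exact ⟨b (QuotientGroup.mk (1:Γ)), by rw [hφapp, hb]; simp⟩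
  have hmove : ∀ (k : Γ) (q : C(X,ℂ)),
      ψ (q.comp ⟨fun x => k • x, hc k⟩) (QuotientGroup.mk (1:Γ)) =
        ψ q (QuotientGroup.mk k) := by
    intro k q
    have h1 := hψeq k⁻¹ q
    have h2 : q.comp (⟨fun x => (k⁻¹)⁻¹ • x, hc (k⁻¹)⁻¹⟩ : C(X,X)) =
        q.comp (⟨fun x => k • x, hc k⟩ : C(X,X)) := by
      congr 1
      ext x
      rw [inv_inv]
    rw [h2] at h1
    rw [h1]
    show ψ q ((k⁻¹)⁻¹ • QuotientGroup.mk (1:Γ)) = _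
    rw [inv_inv, MulAction.Quotient.smul_mk]
    congr 1
    simp
  have hφinv : ∀ (i : Λ) (q : C(X,ℂ)),
      φ (q.comp ((eΛ Λ hc i : X ≃ₜ X) : C(X, X))) = φ q := by
    intro i q
    rw [hφapp, hφapp]
    have he : ((eΛ Λ hc i : X ≃ₜ X) : C(X, X)) = (⟨fun x => (i:Γ) • x, hc (i:Γ)⟩ : C(X,X)) := rfl
    rw [he, hmove]
    congr 1
    rw [QuotientGroup.eq]
    simpa using Λ.inv_mem i.2
  have hφinv' : ∀ (i : Λ) (q : C(X,ℂ)),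
      φ (q.comp ((eΛ Λ hc i).symm : C(X, X))) = φ q := by
    intro i q
    rw [hφapp, hφapp]
    have he : ((eΛ Λ hc i).symm : C(X, X)) =
        (⟨fun x => (i:Γ)⁻¹ • x, hc (i:Γ)⁻¹⟩ : C(X,X)) := rfl
    rw [he, hmove]
    congr 1
    rw [QuotientGroup.eq]
    simpa using i.2
  have huniq' : ∀ η : MeasureTheory.Measure X, MeasureTheory.IsProbabilityMeasure η →
      (∀ i : Λ, MeasureTheory.Measure.map (eΛ Λ hc i) η = η) →
      η = MeasureTheory.Measure.dirac x₀ := by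
    intro η hη hinv
    exact huniq η hη (fun l hl => hinv ⟨l, hl⟩)
  have hkey := key_state_eq_dirac (eΛ Λ hc) x₀ huniq' φ hφ1 hφpos hφinv hφinv'
  have hthis := hkey (f.comp ⟨fun x => g • x, hc g⟩)
  rw [hφapp, hmove] at hthis
  simpa using hthis
end

section
/- Let G be a group and C ⊆ B a co-tight inclusion of G-operator algebras (i.e., there exists a G-tight inclusion A ⊆ B with B generated by A and C). If there exists a G-equivariant ucp map ψ: B → C, then C = B. Consequently a co-tight inclusion admits no proper intermediate G-invariant subalgebra D with a G-equivariant ucp map B → D; in particular no proper weakly Zimmer amenable or injective intermediate object exists. -/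
open scoped BoundedContinuousFunction ENNReal

lemma starPos_matrix_map {R S : Type*} [Ring R] [StarRing R] [Algebra ℂ R]
    [Ring S] [StarRing S] [Algebra ℂ S] (f : R →⋆ₐ[ℂ] S) {n : ℕ}
    {M : Matrix (Fin n) (Fin n) R} (h : StarPos M) : StarPos (M.map f) := by
  obtain ⟨N, rfl⟩ := h
  refine ⟨N.map f, ?_⟩
  ext i j
  simp [Matrix.mul_apply, Matrix.map_apply, Matrix.star_apply, map_mul, map_star, map_sum]

/-- If `C ⊆ B` is a co-tight inclusion of `G`-operator algebras (there is a
`G`-tight inclusion `A ⊆ B` such that `B` is generated as a C*-algebra by `A` and `C`) and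
there is a `G`-equivariant ucp map `ψ : B → C`, then `C = B`. -/
theorem stmt_18 {G A C B : Type*} [Group G]
    [NormedRing A] [StarRing A] [CStarRing A] [NormedAlgebra ℂ A] [StarModule ℂ A]
    [NormedRing C] [StarRing C] [CStarRing C] [NormedAlgebra ℂ C] [StarModule ℂ C]
    [NormedRing B] [StarRing B] [CStarRing B] [NormedAlgebra ℂ B] [StarModule ℂ B]
    [MulSemiringAction G A] [MulSemiringAction G C] [MulSemiringAction G B]
    (ιA : A →⋆ₐ[ℂ] B) (hA_eq : ∀ (g : G) (a : A), ιA (g • a) = g • ιA a)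
    (htight : IsTight G ιA)
    (ιC : C →⋆ₐ[ℂ] B) (hC_inj : Function.Injective ιC)
    (hC_eq : ∀ (g : G) (c : C), ιC (g • c) = g • ιC c)
    (hC_closed : IsClosed (Set.range ιC))
    -- `B` is generated, as a C*-algebra, by (the images of) `A` and `C`:
    (hgen : ∀ S : StarSubalgebra ℂ B, IsClosed (S : Set B) →
      Set.range ιA ⊆ S → Set.range ιC ⊆ S → S = ⊤)
    (ψ : B →ₗ[ℂ] C) (hψucp : IsUCP ψ) (hψeq : IsEquivariant G ψ) :
    Function.Surjective ιC := by
  set φ : A →ₗ[ℂ] B := ιC.toAlgHom.toLinearMap ∘ₗ ψ ∘ₗ ιA.toAlgHom.toLinearMap with hφ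
  have hφucp : IsUCP φ := by
    constructor
    · simp [φ, hψucp.1]
    · intro n M hM
      have h1 : StarPos ((M.map ιA).map ψ) := hψucp.2 n (M.map ιA) (starPos_matrix_map ιA hM)
      have h2 : StarPos (((M.map ιA).map ψ).map ιC) := by
        obtain ⟨N, hN⟩ := h1
        rw [hN]
        exact starPos_matrix_map ιC ⟨N, rfl⟩
      have : M.map φ = ((M.map ιA).map ψ).map ιC := by
        rw [Matrix.map_map, Matrix.map_map]
        rfl
      rw [this]
      exact h2
  have hφeq : IsEquivariant G φ := by
    intro g a
    show ιC (ψ (ιA (g • a))) = g • ιC (ψ (ιA a))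
    rw [hA_eq, hψeq, hC_eq]
  have hfix : ∀ a : A, ιC (ψ (ιA a)) = ιA a := fun a =>
    LinearMap.congr_fun (htight φ hφucp hφeq) a
  have hS : ιC.range = ⊤ := by
    refine hgen ιC.range ?_ ?_ ?_
    · exact hC_closed
    · rintro _ ⟨a, rfl⟩
      exact ⟨ψ (ιA a), hfix a⟩
    · rintro _ ⟨c, rfl⟩
      exact ⟨c, rfl⟩
  intro b
  have : b ∈ ιC.range := hS ▸ trivial
  exact this
end

section
/- Let Γ be a discrete group and (π, ρ) a covariant representation of (Γ, A) such that the inclusion ρ(A) ⊆ Γ ⋉_π^ρ A is Γ-tight. If D is a G-invariant intermediate algebra with C*_π(Γ) ⊆ D ⊆ Γ ⋉_π^ρ A and D is injective (so that there is a conditional expectation E: Γ ⋉_π^ρ A → D), then D = Γ ⋉_π^ρ A. -/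
open scoped BoundedContinuousFunction ENNReal

open UniformSpace UniformSpace.Completion

section CompletionStar

variable (R : Type*) [NormedRing R] [StarRing R] [CStarRing R]

noncomputable instance : Star (Completion R) := ⟨Completion.map star⟩

variable {R}

lemma Completion.coe_star (a : R) : ((star a : R) : Completion R) = star (a : Completion R) :=
  (Completion.map_coe star_isometry.uniformContinuous a).symm

lemma Completion.continuous_star' : Continuous (star : Completion R → Completion R) :=
  Completion.continuous_map

noncomputable instance : StarRing (Completion R) where
  star_involutive x := by
    refine Completion.induction_on x
      (isClosed_eq (Completion.continuous_star'.comp Completion.continuous_star') continuous_id)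
      fun a => by rw [← Completion.coe_star, ← Completion.coe_star, star_star]
  star_mul x y := by
    refine Completion.induction_on₂ x y
      (isClosed_eq (Completion.continuous_star'.comp _root_.continuous_mul)
        ((_root_.continuous_mul.comp (Completion.continuous_star'.prodMap Completion.continuous_star')).comp continuous_swap)) ?_
    intro a b
    simp only [← Completion.coe_mul, ← Completion.coe_star, star_mul]
  star_add x y := by
    refine Completion.induction_on₂ x y
      (isClosed_eq (Completion.continuous_star'.comp _root_.continuous_add)
        (_root_.continuous_add.comp (Completion.continuous_star'.prodMap Completion.continuous_star')) ) ?_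
    intro a b
    simp only [← Completion.coe_add, ← Completion.coe_star, star_add]

instance : CStarRing (Completion R) where
  norm_mul_self_le x := by
    refine Completion.induction_on x
      (isClosed_le (continuous_norm.mul continuous_norm) (continuous_norm.comp (Completion.continuous_star'.mul continuous_id))) ?_
    intro a
    rw [← Completion.coe_star, ← Completion.coe_mul]
    simp only [Completion.norm_coe]
    exact CStarRing.norm_mul_self_le a

end CompletionStar

section CompletionAlg

variable (R : Type*) [NormedRing R] [StarRing R] [CStarRing R]
  [NormedAlgebra ℂ R] [StarModule ℂ R]

noncomputable instance : NormedAlgebra ℂ (Completion R) where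
  norm_smul_le r x := norm_smul_le r x

instance : StarModule ℂ (Completion R) where
  star_smul c x := by
    refine Completion.induction_on x
      (isClosed_eq (Completion.continuous_star'.comp (continuous_const_smul c))
        ((continuous_const_smul (star c)).comp Completion.continuous_star')) fun a => ?_
    rw [← Completion.coe_smul, ← Completion.coe_star, star_smul, Completion.coe_smul,
      Completion.coe_star]

noncomputable instance : CStarAlgebra (Completion R) where

end CompletionAlg

section Key

variable {R : Type*} [NormedRing R] [StarRing R] [CStarRing R]
  [NormedAlgebra ℂ R] [StarModule ℂ R]

lemma key3 (x y z : R) (h : star x * x + star y * y + star z * z = 0) : x = 0 := by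
  let B := Completion R
  letI : PartialOrder B := CStarAlgebra.spectralOrder B
  haveI : StarOrderedRing B := CStarAlgebra.spectralOrderedRing B
  have hB : star (x : B) * x + (star (y : B) * y + star (z : B) * z) = 0 := by
    rw [← Completion.coe_star, ← Completion.coe_star, ← Completion.coe_star,
      ← Completion.coe_mul, ← Completion.coe_mul, ← Completion.coe_mul,
      ← Completion.coe_add, ← Completion.coe_add, ← Completion.coe_zero]
    rw [← add_assoc, h]
  have h1 : (0 : B) ≤ star (x : B) * x := star_mul_self_nonneg _
  have h2 : star (x : B) * x ≤ 0 := by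
    rw [StarOrderedRing.le_iff]
    refine ⟨star (y : B) * y + star (z : B) * z, ?_, hB.symm⟩
    exact add_mem (AddSubmonoid.subset_closure ⟨_, rfl⟩) (AddSubmonoid.subset_closure ⟨_, rfl⟩)
  have h3 : star (x : B) * x = 0 := le_antisymm h2 h1
  have h4 : ‖x‖ * ‖x‖ = 0 := by
    rw [← CStarRing.norm_star_mul_self, ← Completion.norm_coe, Completion.coe_mul,
      Completion.coe_star, h3, norm_zero]
  have := mul_self_eq_zero.mp h4
  exact norm_eq_zero.mp this

end Key

section MD
variable {CP : Type*} [NormedRing CP] [StarRing CP] [CStarRing CP]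
  [NormedAlgebra ℂ CP] [StarModule ℂ CP]

lemma mult_domain (E : CP →ₗ[ℂ] CP) (hE : IsUCP E) (d : CP)
    (hdd : star d * d = 1) (hEd : E d = d) (hEds : E (star d) = star d) (x : CP) :
    E (star d * x) = star d * E x ∧ E (star x * d) = E (star x) * d := by
  classical
  set v : Fin 3 → CP := fun i => if i = 0 then 1 else if i = 1 then d else x with hv
  have hv0 : v 0 = 1 := rfl
  have hv1 : v 1 = d := rfl
  have hv2 : v 2 = x := rfl
  set M : Matrix (Fin 3) (Fin 3) CP := Matrix.of fun i j => star (v i) * v j with hM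
  have hMpos : StarPos M := by
    refine ⟨Matrix.of fun i j => if i = 0 then v j else 0, ?_⟩
    ext i j
    simp [hM, Matrix.mul_apply, Matrix.conjTranspose_apply, Fin.sum_univ_three]
  obtain ⟨C, hC⟩ := hE.2 3 M hMpos
  have hq : ∀ j l, (∑ k, star (C k j) * C k l) = E (star (v j) * v l) := by
    intro j l
    have h1 := congrFun (congrFun hC j) l
    simp only [Matrix.map_apply, Matrix.mul_apply, Matrix.conjTranspose_apply, hM,
      Matrix.of_apply] at h1
    exact h1.symm
  set w : Fin 3 → CP := fun i => C i 1 - C i 0 * d with hw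
  have hterm : ∀ i, star (w i) * w i =
      star (C i 1) * C i 1 - (star (C i 1) * C i 0) * d - star d * (star (C i 0) * C i 1)
      + star d * ((star (C i 0) * C i 0) * d) := by
    intro i
    simp only [hw, star_sub, star_mul]
    noncomm_ring
  have hS : ∑ i, star (w i) * w i = 0 := by
    rw [Finset.sum_congr rfl fun i _ => hterm i]
    rw [Finset.sum_add_distrib, Finset.sum_sub_distrib, Finset.sum_sub_distrib,
      ← Finset.sum_mul, ← Finset.mul_sum, ← Finset.mul_sum, ← Finset.sum_mul]
    rw [hq 1 1, hq 1 0, hq 0 1, hq 0 0, hv0, hv1]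
    simp only [star_one, one_mul, mul_one, hdd, hEd, hEds, hE.1]
    abel
  have hS' : star (w 0) * w 0 + star (w 1) * w 1 + star (w 2) * w 2 = 0 := by
    rw [← hS, Fin.sum_univ_three]
  have hw0 : w 0 = 0 := key3 _ _ _ hS'
  have hw1 : w 1 = 0 := key3 _ _ _
    ((by abel : star (w 1) * w 1 + star (w 0) * w 0 + star (w 2) * w 2
        = star (w 0) * w 0 + star (w 1) * w 1 + star (w 2) * w 2).trans hS')
  have hw2 : w 2 = 0 := key3 _ _ _
    ((by abel : star (w 2) * w 2 + star (w 0) * w 0 + star (w 1) * w 1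
        = star (w 0) * w 0 + star (w 1) * w 1 + star (w 2) * w 2).trans hS')
  have hwz : ∀ i, w i = 0 := fun i => by fin_cases i <;> assumption
  constructor
  · have h0 : (∑ i, star (w i) * C i 2) = 0 :=
      Finset.sum_eq_zero fun i _ => by rw [hwz i, star_zero, zero_mul]
    have hexp : ∀ i, star (w i) * C i 2
        = star (C i 1) * C i 2 - star d * (star (C i 0) * C i 2) := by
      intro i
      simp only [hw, star_sub, star_mul]
      noncomm_ring
    rw [Finset.sum_congr rfl fun i _ => hexp i, Finset.sum_sub_distrib, ← Finset.mul_sum,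
      hq 1 2, hq 0 2, hv0, hv1, hv2, star_one, one_mul, sub_eq_zero] at h0
    exact h0
  · have h0 : (∑ i, star (C i 2) * w i) = 0 :=
      Finset.sum_eq_zero fun i _ => by rw [hwz i, mul_zero]
    have hexp : ∀ i, star (C i 2) * w i
        = star (C i 2) * C i 1 - (star (C i 2) * C i 0) * d := by
      intro i
      simp only [hw]
      noncomm_ring
    rw [Finset.sum_congr rfl fun i _ => hexp i, Finset.sum_sub_distrib, ← Finset.sum_mul,
      hq 2 1, hq 2 0, hv0, hv1, hv2, mul_one, sub_eq_zero] at h0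
    exact h0


end MD

/-- Let `(π, ρ)` be a covariant representation of `(Γ, A)` with crossed
product `CP = Γ ⋉_π^ρ A` (generated by `ρ(A)` and the unitaries `u(Γ)`, with `Γ` acting by
`Ad u`), such that the inclusion `ρ(A) ⊆ CP` is `Γ`-tight. If `D` is an intermediate
C*-algebra with `C*_π(Γ) ⊆ D ⊆ CP` admitting a conditional expectation `E : CP → D`
(e.g. if `D` is injective), then `D = CP`. -/
theorem stmt_19 {Γ A CP : Type*} [Group Γ]
    [NormedRing A] [StarRing A] [CStarRing A] [NormedAlgebra ℂ A] [StarModule ℂ A]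
    [NormedRing CP] [StarRing CP] [CStarRing CP] [NormedAlgebra ℂ CP] [StarModule ℂ CP]
    [MulSemiringAction Γ A] [MulSemiringAction Γ CP]
    (ρ : A →⋆ₐ[ℂ] CP) (u : Γ →* CPˣ)
    (hu_star : ∀ g : Γ, star ((u g : CP)) = (((u g)⁻¹ : CPˣ) : CP))
    (hcov : ∀ (g : Γ) (a : A), ρ (g • a) = (u g : CP) * ρ a * (((u g)⁻¹ : CPˣ) : CP))
    (hAd : ∀ (g : Γ) (x : CP), g • x = (u g : CP) * x * (((u g)⁻¹ : CPˣ) : CP))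
    -- `CP` is generated, as a C*-algebra, by `ρ(A)` and the unitaries `u(Γ)`:
    (hgen : ∀ S : StarSubalgebra ℂ CP, IsClosed (S : Set CP) →
      Set.range ρ ⊆ S → (∀ g : Γ, (u g : CP) ∈ S) → S = ⊤)
    (htight : IsTight Γ ρ)
    (D : StarSubalgebra ℂ CP) (hD_closed : IsClosed (D : Set CP))
    (hπD : ∀ g : Γ, (u g : CP) ∈ D)
    (E : CP →ₗ[ℂ] CP) (hEucp : IsUCP E)
    (hEran : ∀ x : CP, E x ∈ D) (hEproj : ∀ d ∈ D, E d = d) :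
    D = ⊤ := by
  classical
  have main : ∀ g : Γ, (∀ x, E ((u g : CP) * x) = (u g : CP) * E x) ∧
      (∀ y, E (y * (((u g)⁻¹ : CPˣ) : CP)) = E y * (((u g)⁻¹ : CPˣ) : CP)) := by
    intro g
    set d : CP := (((u g)⁻¹ : CPˣ) : CP) with hdd
    have h1 : ((u g)⁻¹ : CPˣ) = u g⁻¹ := (map_inv u g).symm
    have hsd : star d = (u g : CP) := by
      rw [hdd, h1, hu_star g⁻¹, ← map_inv, inv_inv]
    have hsdd : star d * d = 1 := by rw [hsd, hdd]; exact Units.mul_inv _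
    have hEdd : E d = d := hEproj _ (by rw [hdd, h1]; exact hπD g⁻¹)
    have hEsd : E (star d) = star d := by rw [hsd]; exact hEproj _ (hπD g)
    constructor
    · intro x
      have h := (mult_domain E hEucp d hsdd hEdd hEsd x).1
      rwa [hsd] at h
    · intro y
      have h := (mult_domain E hEucp d hsdd hEdd hEsd (star y)).2
      rwa [star_star] at h
  have hequi : ∀ (g : Γ) (x : CP), E (g • x) = g • E x := by
    intro g x
    rw [hAd, hAd, mul_assoc, (main g).1, (main g).2, ← mul_assoc]
  set φ : A →ₗ[ℂ] CP := E.comp ρ.toAlgHom.toLinearMap with hφdef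
  have hφucp : IsUCP φ := by
    constructor
    · show E (ρ 1) = 1
      rw [map_one, hEucp.1]
    · intro n M hM
      have hφcoe : ⇑φ = ⇑E ∘ ⇑ρ := rfl
      have hmap : M.map ⇑φ = (M.map ⇑ρ).map ⇑E := by
        rw [hφcoe, ← Matrix.map_map]
      rw [hmap]
      refine hEucp.2 n _ ?_
      obtain ⟨b, rfl⟩ := hM
      refine ⟨b.map ⇑ρ, ?_⟩
      have hmul : (star b * b).map ⇑ρ = (star b).map ⇑ρ * b.map ⇑ρ := by
        ext i j
        simp [Matrix.map_apply, Matrix.mul_apply, map_sum, map_mul]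
      rw [hmul]
      congr 1
      ext i j
      simp [Matrix.map_apply, Matrix.conjTranspose_apply, map_star]
  have hφeq : IsEquivariant Γ φ := by
    intro g a
    show E (ρ (g • a)) = g • E (ρ a)
    rw [hcov, ← hAd, hequi]
  have hφ := htight φ hφucp hφeq
  have hmem : ∀ a : A, ρ a ∈ D := by
    intro a
    have : φ a = ρ a := by rw [hφ]; rfl
    rw [← this]
    exact hEran _
  refine hgen D hD_closed ?_ hπD
  rintro _ ⟨a, rfl⟩
  exact hmem a
end
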